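/- arXiv:1901.00605 — 6 statements merged into one kernel-verified Lean document; each statement's English description precedes it below -/
import Mathlib

section
/- Let $a, m, s$ be positive integers, $k \geq 1$, and set $r = 1 + 2ams$, $u = 1 + 2a^2 m r^{k-1}$, $v = a$, $w = 2am$, $x = (s + a r^k)/(2a)$. Then for each integer $n$ with $0 \le n \le k-1$, the matrix $N_n = \begin{pmatrix} u & r^{k-1-n} v \\ r^n w & r u - 2 v w x \end{pmatrix}$ factors as $\begin{pmatrix} a r^{k-1-n} & 1 \\ 1 & 0 \end{pmatrix} \begin{pmatrix} 2am\, r^n & 1 \\ 1 & 0 \end{pmatrix}$. -/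
/-- the factorization of the matrices `N_n` used to prove
Theorem 1 (with `r = 1 + 2ams`). -/
theorem Nn_factorization (a m s k : ℕ) (ha : 0 < a) (hm : 0 < m) (hs : 0 < s)
    (hk : 1 ≤ k) (n : ℕ) (hn : n ≤ k - 1) :
    let r : ℚ := 1 + 2 * a * m * s
    let u : ℚ := 1 + 2 * (a : ℚ) ^ 2 * m * r ^ (k - 1)
    let v : ℚ := a
    let w : ℚ := 2 * a * m
    let x : ℚ := (s + a * r ^ k) / (2 * a)
    (!![u, r ^ (k - 1 - n) * v; r ^ n * w, r * u - 2 * v * w * x] :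
        Matrix (Fin 2) (Fin 2) ℚ) =
      !![(a : ℚ) * r ^ (k - 1 - n), 1; 1, 0] * !![2 * (a : ℚ) * m * r ^ n, 1; 1, 0] := by
  intro r u v w x
  have ha' : (a : ℚ) ≠ 0 := Nat.cast_ne_zero.mpr ha.ne'
  have hpow : r ^ (k - 1 - n) * r ^ n = r ^ (k - 1) := by
    rw [← pow_add]; congr 1; omega
  have hpowk : r ^ k = r * r ^ (k - 1) := by
    rw [← pow_succ']; congr 1; omega
  have hr : r = 1 + 2 * (a : ℚ) * m * s := rfl
  ext i j
  fin_cases i <;> fin_cases j <;>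
    simp [Matrix.mul_apply, Fin.sum_univ_succ, u, v, w, x, hpowk]
  · linear_combination (-2 * (a : ℚ) ^ 2 * m) * hpow
  · ring
  · ring
  · have hx : 2 * (a : ℚ) * (2 * a * m) * ((s + a * (r * r ^ (k - 1))) / (2 * a)) =
        2 * a * m * (s + a * (r * r ^ (k - 1))) := by
      rw [mul_comm (2 * (a : ℚ)) (2 * a * m), mul_assoc, mul_div_cancel₀]
      positivity
    rw [hx]
    linear_combination hr
end

section
/- Let $a, m, s, k$ be positive integers and set $D = m\big(2(1 + 2ams)^k + m(s + a(1 + 2ams)^k)^2\big)$. Then the regular continued fraction expansion of $\sqrt{D}$ is periodic with $\sqrt{D} = [m(s + a(1+2ams)^k);\; \overline{a,\, 2am(1+2ams)^{k-1},\, a(1+2ams),\, 2am(1+2ams)^{k-2},\, \dots,\, a(1+2ams)^{k-1},\, 2am,\, s + a(1+2ams)^k,\, 2am,\, a(1+2ams)^{k-1},\, \dots,\, 2am(1+2ams)^{k-1},\, a,\, 2m(s + a(1+2ams)^k)}]$, and the fundamental period has length $4k + 2$. -/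
set_option maxHeartbeats 1000000


/-- The Gauss-map iterates of `x`: `cfX x 0 = x` and
`cfX x (n+1) = 1 / (cfX x n - ⌊cfX x n⌋)`. -/
noncomputable def cfX (x : ℝ) : ℕ → ℝ
  | 0 => x
  | n + 1 => (cfX x n - ⌊cfX x n⌋)⁻¹

/-- The `n`-th partial quotient of the regular continued fraction of `x`. -/
noncomputable def cfA (x : ℝ) (n : ℕ) : ℤ := ⌊cfX x n⌋

/-- `p` is a period (from index `1` on) of the continued fraction expansion of `x`. -/
def cfPeriod (x : ℝ) (p : ℕ) : Prop :=
  0 < p ∧ ∀ n, 1 ≤ n → cfA x (n + p) = cfA x n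

lemma step (D P Q P' Q' v : ℤ)
    (hQ : 0 < Q) (hQ' : 0 < Q')
    (hP'def : P' = v * Q - P) (hQQ : Q * Q' = D - P' ^ 2) (hP0 : 0 ≤ P')
    (hlt : Q' < 2 * P' + Q) :
    ⌊(((P : ℝ) + Real.sqrt D) / Q)⌋ = v ∧
      ((((P : ℝ) + Real.sqrt D) / Q) - v)⁻¹ = ((P' : ℝ) + Real.sqrt D) / Q' := by
  have hD : (P' : ℤ) ^ 2 < D := by nlinarith
  have hDpos : (0:ℤ) ≤ D := by nlinarith
  have hDR : (0:ℝ) ≤ (D:ℝ) := by exact_mod_cast hDpos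
  have hsq : Real.sqrt (D:ℝ) ^ 2 = (D:ℝ) := Real.sq_sqrt hDR
  have hP0R : (0:ℝ) ≤ (P':ℝ) := by exact_mod_cast hP0
  have hDlt : ((P':ℝ)) ^ 2 < (D:ℝ) := by exact_mod_cast hD
  have h1 : (P' : ℝ) < Real.sqrt (D:ℝ) := by
    nlinarith [Real.sqrt_nonneg (D:ℝ), hsq, hDlt, hP0R]
  have h2 : Real.sqrt (D:ℝ) < (P':ℝ) + (Q:ℝ) := by
    rw [show (P':ℝ) + Q = ((P' + Q : ℤ) : ℝ) by push_cast; ring]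
    rw [Real.sqrt_lt' (by exact_mod_cast (show (0:ℤ) < P' + Q by linarith))]
    exact_mod_cast (show (D:ℤ) < (P' + Q)^2 by nlinarith)
  have hQR : (0:ℝ) < (Q:ℝ) := by exact_mod_cast hQ
  have hQ'R : (0:ℝ) < (Q':ℝ) := by exact_mod_cast hQ'
  have hvq : (v:ℝ) * Q = (P':ℝ) + P := by
    have : v * Q = P' + P := by linarith [hP'def]
    exact_mod_cast this
  constructor
  · rw [Int.floor_eq_iff]
    constructor
    · rw [le_div_iff₀ hQR]
      linarith
    · rw [div_lt_iff₀ hQR]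
      push_cast
      linarith
  · have hx : (((P : ℝ) + Real.sqrt D) / Q) - v = (Real.sqrt D - P') / Q := by
      field_simp
      linarith
    rw [hx, inv_div, div_eq_div_iff (by linarith) (ne_of_gt hQ'R)]
    have hQQ2 : (Q:ℝ) * Q' = (D:ℝ) - (P':ℝ)^2 := by exact_mod_cast hQQ
    linear_combination hQQ2 - hsq
set_option maxHeartbeats 1000000

namespace T1

def R (a m s : ℕ) : ℤ := 1 + 2 * (a:ℤ) * m * s
def C (a m s k : ℕ) : ℤ := (s:ℤ) + a * R a m s ^ k
def E (a m s k : ℕ) : ℤ := (a:ℤ) * R a m s ^ k - s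
def DD (a m s k : ℕ) : ℤ := (m:ℤ) * (2 * R a m s ^ k + m * C a m s k ^ 2)
def tt (k i : ℕ) : ℕ := if i ≤ 2*k+1 then i else 4*k+2 - i
def qf (a m s k : ℕ) (i : ℕ) : ℤ :=
  if i = 4*k+2 then 2 * ((m:ℤ) * C a m s k)
  else if tt k i = 2*k+1 then C a m s k
  else if tt k i % 2 = 1 then (a:ℤ) * R a m s ^ (tt k i / 2)
  else 2 * (a:ℤ) * m * R a m s ^ (k - tt k i / 2)
def Pf (a m s k i : ℕ) : ℤ := if i % 2 = 1 ↔ i ≤ 2*k+1 then (m:ℤ) * C a m s k else (m:ℤ) * E a m s k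
def Qf (a m s k i : ℕ) : ℤ := if i % 2 = 1 then 2*(m:ℤ)*R a m s ^ (k - tt k i / 2) else R a m s ^ (tt k i / 2)

lemma tt_lo {k i : ℕ} (h : i ≤ 2*k+1) : tt k i = i := if_pos h
lemma tt_hi {k i : ℕ} (h : ¬ i ≤ 2*k+1) : tt k i = 4*k+2-i := if_neg h
lemma Pf_C {a m s k i : ℕ} (h : i % 2 = 1 ↔ i ≤ 2*k+1) : Pf a m s k i = m * C a m s k := if_pos h
lemma Pf_E {a m s k i : ℕ} (h : ¬(i % 2 = 1 ↔ i ≤ 2*k+1)) : Pf a m s k i = m * E a m s k := if_neg h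
lemma Qf_odd {a m s k i : ℕ} (h : i % 2 = 1) :
    Qf a m s k i = 2*(m:ℤ)*R a m s ^ (k - tt k i / 2) := if_pos h
lemma Qf_even {a m s k i : ℕ} (h : ¬ i % 2 = 1) :
    Qf a m s k i = R a m s ^ (tt k i / 2) := if_neg h
lemma qf_end {a m s k : ℕ} : qf a m s k (4*k+2) = 2 * ((m:ℤ) * C a m s k) := if_pos rfl
lemma qf_center {a m s k i : ℕ} (h1 : i ≠ 4*k+2) (h2 : tt k i = 2*k+1) :
    qf a m s k i = C a m s k := by unfold qf; rw [if_neg h1, if_pos h2]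
lemma qf_odd {a m s k i : ℕ} (h1 : i ≠ 4*k+2) (h2 : tt k i ≠ 2*k+1) (h3 : tt k i % 2 = 1) :
    qf a m s k i = (a:ℤ) * R a m s ^ (tt k i / 2) := by
  unfold qf; rw [if_neg h1, if_neg h2, if_pos h3]
lemma qf_even {a m s k i : ℕ} (h1 : i ≠ 4*k+2) (h2 : tt k i ≠ 2*k+1) (h3 : ¬ tt k i % 2 = 1) :
    qf a m s k i = 2 * (a:ℤ) * m * R a m s ^ (k - tt k i / 2) := by
  unfold qf; rw [if_neg h1, if_neg h2, if_neg h3]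

section
variable (a m s k : ℕ) (ha : 0 < a) (hm : 0 < m) (hs : 0 < s) (hk : 0 < k)
include ha hm hs hk

lemma hR1 : 1 < R a m s := by
  have h1 : (1:ℤ) ≤ a := by exact_mod_cast ha
  have h2 : (1:ℤ) ≤ m := by exact_mod_cast hm
  have h3 : (1:ℤ) ≤ s := by exact_mod_cast hs
  have h4 : (0:ℤ) < 2*(a:ℤ)*m*s := by
    apply mul_pos (mul_pos (by linarith : (0:ℤ) < 2*(a:ℤ)) (by linarith : (0:ℤ) < (m:ℤ)))
    linarith
  unfold R; linarith

lemma facts_i (i : ℕ) (hi1 : 1 ≤ i) (hi2 : i ≤ 4*k+2) :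
    Pf a m s k (if i = 4*k+2 then 1 else i+1) = qf a m s k i * Qf a m s k i - Pf a m s k i ∧
    Qf a m s k i * Qf a m s k (if i = 4*k+2 then 1 else i+1)
      = DD a m s k - (Pf a m s k (if i = 4*k+2 then 1 else i+1))^2 ∧
    0 < Qf a m s k i ∧
    0 ≤ Pf a m s k (if i = 4*k+2 then 1 else i+1) ∧
    Qf a m s k (if i = 4*k+2 then 1 else i+1)
      < 2 * Pf a m s k (if i = 4*k+2 then 1 else i+1) + Qf a m s k i := by
  have haZ : (1:ℤ) ≤ a := by exact_mod_cast ha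
  have hmZ : (1:ℤ) ≤ m := by exact_mod_cast hm
  have hsZ : (1:ℤ) ≤ s := by exact_mod_cast hs
  have hR : 1 < R a m s := hR1 a m s k ha hm hs hk
  have hRv : R a m s = 1 + 2 * (a:ℤ) * m * s := rfl
  have hR0 : (0:ℤ) < R a m s := by linarith
  have hX : (0:ℤ) < R a m s ^ k := pow_pos hR0 k
  have hRk : R a m s ≤ R a m s ^ k := le_self_pow₀ hR.le hk.ne'
  have h2ms : 2 * (m:ℤ) * s < R a m s := by rw [hRv]; nlinarith
  have hE : (0:ℤ) < E a m s k := by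
    unfold E
    nlinarith [mul_nonneg (by linarith : (0:ℤ) ≤ (a:ℤ)-1) hX.le]
  have hC : (0:ℤ) < C a m s k := by unfold C; nlinarith
  have haX : (0:ℤ) ≤ ((a:ℤ)-1) * R a m s ^ k :=
    mul_nonneg (by linarith) hX.le
  by_cases hf : i = 4*k+2
  · -- case f : i = 4k+2, next index 1
    subst hf
    rw [if_pos rfl]
    have ht : tt k (4*k+2) = 0 := by unfold tt; rw [if_neg (by omega)]; omega
    have ht1 : tt k 1 = 1 := tt_lo (by omega)
    rw [Pf_C (i := 1) (by omega), Pf_C (i := 4*k+2) (by omega),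
      Qf_even (i := 4*k+2) (by omega), Qf_odd (i := 1) (by omega), qf_end, ht, ht1]
    have e1 : (0:ℕ)/2 = 0 := by omega
    have e2 : k - (1:ℕ)/2 = k := by omega
    rw [e1, e2, pow_zero]
    refine ⟨by ring, by simp only [DD]; ring, by norm_num, by nlinarith, ?_⟩
    simp only [C]
    nlinarith [haX]
  by_cases hcen : i = 2*k+1
  · -- case c : center
    subst hcen
    rw [if_neg hf]
    have ht : tt k (2*k+1) = 2*k+1 := tt_lo (by omega)
    have ht' : tt k (2*k+2) = 2*k := by unfold tt; rw [if_neg (by omega)]; omega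
    rw [show (2*k+1+1) = 2*k+2 from by omega]
    rw [Pf_C (i := 2*k+2) (by omega), Pf_C (i := 2*k+1) (by omega),
      Qf_odd (i := 2*k+1) (by omega), Qf_even (i := 2*k+2) (by omega),
      qf_center hf ht, ht, ht']
    have e1 : k - (2*k+1)/2 = 0 := by omega
    have e2 : (2*k)/2 = k := by omega
    rw [e1, e2, pow_zero]
    refine ⟨by ring, by simp only [DD]; ring, by nlinarith, by nlinarith, ?_⟩
    simp only [C]
    nlinarith [haX]
  by_cases hod : i % 2 = 1
  · by_cases hlo : i ≤ 2*k+1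
    · -- case a : i = 2j+1, j < k
      obtain ⟨j, rfl⟩ : ∃ j, i = 2*j+1 := ⟨i/2, by omega⟩
      have hj : j < k := by omega
      rw [if_neg hf]
      have ht : tt k (2*j+1) = 2*j+1 := tt_lo (by omega)
      have ht' : tt k (2*j+1+1) = 2*j+2 := tt_lo (by omega)
      rw [Pf_E (i := 2*j+1+1) (by omega), Pf_C (i := 2*j+1) (by omega),
        Qf_odd (i := 2*j+1) (by omega), Qf_even (i := 2*j+1+1) (by omega),
        qf_odd hf (by rw [ht]; omega) (by rw [ht]; omega), ht, ht']
      have e1 : (2*j+1)/2 = j := by omega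
      have e2 : (2*j+2)/2 = j+1 := by omega
      rw [e1, e2]
      have hjk2 : R a m s ^ j * R a m s ^ (k-j) = R a m s ^ k := by
        rw [← pow_add]; congr 1; omega
      have hjk : R a m s ^ (k-j) * R a m s ^ (j+1) = R a m s ^ k * R a m s := by
        rw [← pow_add, ← pow_succ]; congr 1; omega
      have hp1 : R a m s ^ (j+1) ≤ R a m s ^ k := pow_le_pow_right₀ hR.le (by omega)
      have hp2 : R a m s ≤ R a m s ^ (j+1) := le_self_pow₀ hR.le (by omega)
      refine ⟨by simp only [C, E]; linear_combination (-2*(a:ℤ)*(m:ℤ)) * hjk2,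
        by simp only [DD, C, E]; linear_combination (2*(m:ℤ))*hjk + (2*(m:ℤ)*R a m s^k) * hRv,
        by positivity, by nlinarith, ?_⟩
      simp only [E]
      nlinarith [hp1, hp2, h2ms, haX, pow_pos hR0 (k-j),
        mul_nonneg (by linarith : (0:ℤ) ≤ (m:ℤ)-1)
          (by linarith : (0:ℤ) ≤ R a m s ^ k - R a m s ^ (j+1))]
    · -- case e : i odd, 2k+3 ≤ i ≤ 4k+1
      obtain ⟨w, hw, rfl⟩ : ∃ w, w < k ∧ i = 4*k+1-2*w := ⟨(4*k+1-i)/2, by omega, by omega⟩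
      rw [if_neg hf]
      have ht : tt k (4*k+1-2*w) = 2*w+1 := by unfold tt; rw [if_neg (by omega)]; omega
      have ht' : tt k (4*k+1-2*w+1) = 2*w := by unfold tt; rw [if_neg (by omega)]; omega
      rw [Pf_C (i := 4*k+1-2*w+1) (by omega), Pf_E (i := 4*k+1-2*w) (by omega),
        Qf_odd (i := 4*k+1-2*w) (by omega), Qf_even (i := 4*k+1-2*w+1) (by omega),
        qf_odd hf (by rw [ht]; omega) (by rw [ht]; omega), ht, ht']
      have e1 : (2*w+1)/2 = w := by omega
      have e2 : (2*w)/2 = w := by omega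
      rw [e1, e2]
      have hwk : R a m s ^ w * R a m s ^ (k-w) = R a m s ^ k := by
        rw [← pow_add]; congr 1; omega
      have hp1 : R a m s ^ w ≤ R a m s ^ k := pow_le_pow_right₀ hR.le (by omega)
      refine ⟨by simp only [C, E]; linear_combination (-2*(a:ℤ)*(m:ℤ)) * hwk,
        by simp only [DD, C, E]; linear_combination (2*(m:ℤ)) * hwk,
        by positivity, by nlinarith, ?_⟩
      simp only [C]
      nlinarith [hp1, haX, pow_pos hR0 (k-w),
        mul_nonneg (by linarith : (0:ℤ) ≤ (m:ℤ)-1)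
          (by linarith : (0:ℤ) ≤ R a m s ^ k - R a m s ^ w)]
  · by_cases hlo : i ≤ 2*k+1
    · -- case b : i = 2u, 1 ≤ u ≤ k
      obtain ⟨u, rfl⟩ : ∃ u, i = 2*u := ⟨i/2, by omega⟩
      have hu1 : 1 ≤ u := by omega
      have hu2 : u ≤ k := by omega
      rw [if_neg hf]
      have ht : tt k (2*u) = 2*u := tt_lo (by omega)
      have ht' : tt k (2*u+1) = 2*u+1 := tt_lo (by omega)
      rw [Pf_C (i := 2*u+1) (by omega), Pf_E (i := 2*u) (by omega),
        Qf_even (i := 2*u) (by omega), Qf_odd (i := 2*u+1) (by omega),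
        qf_even hf (by rw [ht]; omega) (by rw [ht]; omega), ht, ht']
      have e1 : (2*u)/2 = u := by omega
      have e2 : (2*u+1)/2 = u := by omega
      rw [e1, e2]
      have huk : R a m s ^ (k-u) * R a m s ^ u = R a m s ^ k := by
        rw [← pow_add]; congr 1; omega
      have hp1 : R a m s ^ (k-u) ≤ R a m s ^ k := pow_le_pow_right₀ hR.le (by omega)
      refine ⟨by simp only [C, E]; linear_combination (-2*(a:ℤ)*(m:ℤ)) * huk,
        by simp only [DD, C, E]; linear_combination (2*(m:ℤ)) * huk,
        by positivity, by nlinarith, ?_⟩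
      simp only [C]
      nlinarith [hp1, haX, pow_pos hR0 u,
        mul_nonneg (by linarith : (0:ℤ) ≤ (m:ℤ)-1)
          (by linarith : (0:ℤ) ≤ R a m s ^ k - R a m s ^ (k-u))]
    · -- case d : i even, 2k+2 ≤ i ≤ 4k
      obtain ⟨w, hw1, hw2, rfl⟩ : ∃ w, 1 ≤ w ∧ w ≤ k ∧ i = 4*k+2-2*w :=
        ⟨(4*k+2-i)/2, by omega, by omega, by omega⟩
      rw [if_neg hf]
      have ht : tt k (4*k+2-2*w) = 2*w := by unfold tt; rw [if_neg (by omega)]; omega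
      have ht' : tt k (4*k+2-2*w+1) = 2*w-1 := by unfold tt; rw [if_neg (by omega)]; omega
      rw [Pf_E (i := 4*k+2-2*w+1) (by omega), Pf_C (i := 4*k+2-2*w) (by omega),
        Qf_even (i := 4*k+2-2*w) (by omega), Qf_odd (i := 4*k+2-2*w+1) (by omega),
        qf_even hf (by rw [ht]; omega) (by rw [ht]; omega), ht, ht']
      have e1 : (2*w)/2 = w := by omega
      have e2 : k - (2*w-1)/2 = k-w+1 := by omega
      rw [e1, e2]
      have hwk : R a m s ^ (k-w) * R a m s ^ w = R a m s ^ k := by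
        rw [← pow_add]; congr 1; omega
      have hw2k : R a m s ^ w * R a m s ^ (k-w+1) = R a m s ^ k * R a m s := by
        rw [← pow_add, ← pow_succ]; congr 1; omega
      have hp1 : R a m s ^ (k-w+1) ≤ R a m s ^ k := pow_le_pow_right₀ hR.le (by omega)
      have hp2 : R a m s ≤ R a m s ^ w := le_self_pow₀ hR.le (by omega)
      refine ⟨by simp only [C, E]; linear_combination (-2*(a:ℤ)*(m:ℤ)) * hwk,
        by simp only [DD, C, E]; linear_combination (2*(m:ℤ)) * hw2k + (2*(m:ℤ)*R a m s^k) * hRv,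
        by positivity, by nlinarith, ?_⟩
      simp only [E]
      have hb := mul_nonneg (by linarith : (0:ℤ) ≤ 2*(m:ℤ))
        (by linarith : (0:ℤ) ≤ R a m s ^ k - R a m s ^ (k-w+1))
      have hc := mul_nonneg (by linarith : (0:ℤ) ≤ 2*(m:ℤ)) haX
      linarith [hb, hc, hp2, h2ms]

end

def idx (k n : ℕ) : ℕ := (n - 1) % (4*k+2) + 1
def PP (a m s k n : ℕ) : ℤ := if n = 0 then 0 else Pf a m s k (idx k n)
def QQ (a m s k n : ℕ) : ℤ := if n = 0 then 1 else Qf a m s k (idx k n)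
def vv (a m s k n : ℕ) : ℤ := if n = 0 then (m:ℤ) * C a m s k else qf a m s k (idx k n)

lemma idx_lb (k n : ℕ) : 1 ≤ idx k n := Nat.le_add_left 1 _

lemma idx_ub (k n : ℕ) : idx k n ≤ 4*k+2 :=
  Nat.succ_le_of_lt (Nat.mod_lt _ (by omega))

lemma idx_succ (k n : ℕ) (hn : 1 ≤ n) :
    idx k (n+1) = if idx k n = 4*k+2 then 1 else idx k n + 1 := by
  unfold idx
  have h1 : (1:ℕ) % (4*k+2) = 1 := Nat.mod_eq_of_lt (by omega)
  rw [show n + 1 - 1 = (n-1) + 1 by omega, Nat.add_mod, h1]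
  have hmod : (n-1) % (4*k+2) < 4*k+2 := Nat.mod_lt _ (by omega)
  generalize hx : (n-1) % (4*k+2) = x at hmod ⊢
  by_cases hcase : x = 4*k+1
  · subst hcase
    rw [show 4*k+1+1 = 4*k+2 by omega, Nat.mod_self, if_pos (by omega)]
  · rw [Nat.mod_eq_of_lt (by omega), if_neg (by omega)]

section
variable (a m s k : ℕ) (ha : 0 < a) (hm : 0 < m) (hs : 0 < s) (hk : 0 < k)
include ha hm hs hk

lemma facts (n : ℕ) :
    PP a m s k (n+1) = vv a m s k n * QQ a m s k n - PP a m s k n ∧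
    QQ a m s k n * QQ a m s k (n+1) = DD a m s k - (PP a m s k (n+1))^2 ∧
    0 < QQ a m s k n ∧ 0 ≤ PP a m s k (n+1) ∧
    QQ a m s k (n+1) < 2 * PP a m s k (n+1) + QQ a m s k n := by
  have haZ : (1:ℤ) ≤ a := by exact_mod_cast ha
  have hmZ : (1:ℤ) ≤ m := by exact_mod_cast hm
  have hsZ : (1:ℤ) ≤ s := by exact_mod_cast hs
  have hR : 1 < R a m s := hR1 a m s k ha hm hs hk
  have hR0 : (0:ℤ) < R a m s := by linarith
  have hX : (0:ℤ) < R a m s ^ k := pow_pos hR0 k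
  have haX : (0:ℤ) ≤ ((a:ℤ)-1) * R a m s ^ k :=
    mul_nonneg (by linarith) hX.le
  have hC : (0:ℤ) < C a m s k := by unfold C; nlinarith
  rcases Nat.eq_zero_or_pos n with rfl | hn
  · have hidx : idx k 1 = 1 := by unfold idx; simp
    have ht1 : tt k 1 = 1 := tt_lo (by omega)
    have eP0 : PP a m s k 0 = 0 := if_pos rfl
    have eQ0 : QQ a m s k 0 = 1 := if_pos rfl
    have eV0 : vv a m s k 0 = (m:ℤ) * C a m s k := if_pos rfl
    have eP1 : PP a m s k 1 = Pf a m s k (idx k 1) := if_neg (by omega)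
    have eQ1 : QQ a m s k 1 = Qf a m s k (idx k 1) := if_neg (by omega)
    rw [show (0:ℕ)+1 = 1 from rfl, eP0, eQ0, eV0, eP1, eQ1, hidx,
      Pf_C (i := 1) (by omega), Qf_odd (i := 1) (by omega), ht1]
    rw [show k - (1:ℕ)/2 = k by omega]
    refine ⟨by ring, by simp only [DD]; ring, by norm_num, by nlinarith, ?_⟩
    simp only [C]
    nlinarith [haX]
  · have h1 : ¬ (n = 0) := by omega
    have h2 : ¬ (n+1 = 0) := by omega
    simp only [PP, QQ, vv, if_neg h1, if_neg h2]
    rw [idx_succ k n hn]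
    exact facts_i a m s k ha hm hs hk (idx k n) (idx_lb k n) (idx_ub k n)

lemma cf_step (n : ℕ) :
    ⌊((PP a m s k n : ℝ) + Real.sqrt (DD a m s k : ℤ)) / (QQ a m s k n : ℝ)⌋ = vv a m s k n ∧
    (((PP a m s k n : ℝ) + Real.sqrt (DD a m s k : ℤ)) / (QQ a m s k n : ℝ) - (vv a m s k n : ℝ))⁻¹
      = ((PP a m s k (n+1) : ℝ) + Real.sqrt (DD a m s k : ℤ)) / (QQ a m s k (n+1) : ℝ) := by
  obtain ⟨f1, f2, f3, f4, f5⟩ := facts a m s k ha hm hs hk n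
  have f3' := (facts a m s k ha hm hs hk (n+1)).2.2.1
  exact step (DD a m s k) (PP a m s k n) (QQ a m s k n) (PP a m s k (n+1))
    (QQ a m s k (n+1)) (vv a m s k n) f3 f3' f1 f2 f4 f5

lemma cf_X (n : ℕ) :
    cfX (Real.sqrt (DD a m s k : ℤ)) n
      = ((PP a m s k n : ℝ) + Real.sqrt (DD a m s k : ℤ)) / (QQ a m s k n : ℝ) := by
  induction n with
  | zero => simp [cfX, PP, QQ]
  | succ n ih =>
    show (cfX (Real.sqrt (DD a m s k : ℤ)) n - ⌊cfX (Real.sqrt (DD a m s k : ℤ)) n⌋)⁻¹ = _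
    rw [ih, (cf_step a m s k ha hm hs hk n).1, (cf_step a m s k ha hm hs hk n).2]

lemma cf_A (n : ℕ) : cfA (Real.sqrt (DD a m s k : ℤ)) n = vv a m s k n := by
  unfold cfA
  rw [cf_X a m s k ha hm hs hk n]
  exact (cf_step a m s k ha hm hs hk n).1

lemma qf_lt (i : ℕ) (h1 : 1 ≤ i) (h2 : i ≤ 4*k+1) :
    qf a m s k i < 2 * ((m:ℤ) * C a m s k) := by
  have haZ : (1:ℤ) ≤ a := by exact_mod_cast ha
  have hmZ : (1:ℤ) ≤ m := by exact_mod_cast hm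
  have hsZ : (1:ℤ) ≤ s := by exact_mod_cast hs
  have hR : 1 < R a m s := hR1 a m s k ha hm hs hk
  have hR0 : (0:ℤ) < R a m s := by linarith
  have hX : (0:ℤ) < R a m s ^ k := pow_pos hR0 k
  have haX : (0:ℤ) ≤ ((a:ℤ)-1) * R a m s ^ k := mul_nonneg (by linarith) hX.le
  have hC : (0:ℤ) < C a m s k := by unfold C; nlinarith
  have htb : 1 ≤ tt k i ∧ tt k i ≤ 2*k+1 := by unfold tt; split_ifs <;> omega
  unfold qf
  rw [if_neg (by omega)]
  split_ifs with hA hB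
  · nlinarith [hC]
  · -- a * R^(tt/2), tt odd and ≠ 2k+1 so tt/2 < k
    have hlt : tt k i / 2 < k := by omega
    have hp : R a m s ^ (tt k i / 2) ≤ R a m s ^ k := pow_le_pow_right₀ hR.le (by omega)
    have g1 : (0:ℤ) ≤ (a:ℤ) * (R a m s ^ k - R a m s ^ (tt k i / 2)) :=
      mul_nonneg (by linarith) (by linarith)
    have g2 : (0:ℤ) ≤ (a:ℤ) * ((m:ℤ)-1) * R a m s ^ k :=
      mul_nonneg (mul_nonneg (by linarith) (by linarith)) hX.le
    simp only [C]
    nlinarith [g1, g2]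
  · -- 2*a*m*R^(k - tt/2), tt even ≥ 2 so k - tt/2 < k
    have hlt : k - tt k i / 2 < k := by omega
    have hp : R a m s ^ (k - tt k i / 2) ≤ R a m s ^ (k-1) := pow_le_pow_right₀ hR.le (by omega)
    have hp2 : R a m s ^ (k-1) * R a m s = R a m s ^ k := by
      rw [← pow_succ]; congr 1; omega
    have ham : (1:ℤ) ≤ (a:ℤ)*m := by nlinarith
    have g1 : 2*(a:ℤ)*m*R a m s ^ (k - tt k i / 2) ≤ 2*(a:ℤ)*m*R a m s ^ (k-1) := by
      have := mul_le_mul_of_nonneg_left hp (by linarith : (0:ℤ) ≤ 2*(a:ℤ)*m)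
      linarith
    have g2 : 2*(a:ℤ)*m*R a m s ^ (k-1) < 2*(a:ℤ)*m*R a m s ^ k := by
      have hRgt : R a m s ^ (k-1) < R a m s ^ (k-1) * R a m s := by
        nlinarith [pow_pos hR0 (k-1)]
      nlinarith [hRgt, pow_pos hR0 (k-1)]
    simp only [C]
    nlinarith [g1, g2, hp2]

end
end T1

/-- Theorem 1: explicit periodic continued fraction expansion of
`√D` for `D = m(2(1+2ams)^k + m(s + a(1+2ams)^k)^2)`, with fundamental period
length `4k + 2`. -/
theorem theorem_t1 (a m s k : ℕ) (ha : 0 < a) (hm : 0 < m) (hs : 0 < s)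
    (hk : 0 < k) :
    let r : ℤ := 1 + 2 * a * m * s
    let D : ℤ := m * (2 * r ^ k + m * ((s : ℤ) + a * r ^ k) ^ 2)
    -- the periodic block of partial quotients, indexed by `i = 1, …, 4k+2`
    let q : ℕ → ℤ := fun i =>
      if i = 4 * k + 2 then 2 * ((m : ℤ) * ((s : ℤ) + a * r ^ k))
      else
        let t : ℕ := if i ≤ 2 * k + 1 then i else 4 * k + 2 - i
        if t = 2 * k + 1 then (s : ℤ) + a * r ^ k
        else if t % 2 = 1 then (a : ℤ) * r ^ (t / 2)
        else 2 * (a : ℤ) * m * r ^ (k - t / 2)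
    cfA (Real.sqrt (D : ℝ)) 0 = (m : ℤ) * ((s : ℤ) + a * r ^ k) ∧
    (∀ n : ℕ, 1 ≤ n →
      cfA (Real.sqrt (D : ℝ)) n = q ((n - 1) % (4 * k + 2) + 1)) ∧
    IsLeast {p : ℕ | cfPeriod (Real.sqrt (D : ℝ)) p} (4 * k + 2) := by
  intro r D q
  have hA := T1.cf_A a m s k ha hm hs hk
  refine ⟨hA 0, ?_, ?_, ?_⟩
  · intro n hn
    show cfA (Real.sqrt ((T1.DD a m s k : ℤ) : ℝ)) n = T1.qf a m s k (T1.idx k n)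
    rw [hA n]
    unfold T1.vv
    rw [if_neg (by omega)]
  · -- membership : 4k+2 is a period
    refine ⟨by omega, fun n hn => ?_⟩
    show cfA (Real.sqrt ((T1.DD a m s k : ℤ) : ℝ)) (n + (4*k+2))
        = cfA (Real.sqrt ((T1.DD a m s k : ℤ) : ℝ)) n
    rw [hA, hA]
    have hidx : T1.idx k (n + (4*k+2)) = T1.idx k n := by
      unfold T1.idx
      rw [show n + (4*k+2) - 1 = (n-1) + (4*k+2) by omega, Nat.add_mod_right]
    unfold T1.vv
    rw [if_neg (by omega), if_neg (by omega), hidx]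
  · -- minimality
    intro p hp
    obtain ⟨hp0, hper⟩ := hp
    by_contra hcon
    push_neg at hcon
    have heq := hper (4*k+2-p) (by omega)
    rw [show 4*k+2-p+p = 4*k+2 by omega] at heq
    have heq' : cfA (Real.sqrt ((T1.DD a m s k : ℤ) : ℝ)) (4*k+2)
        = cfA (Real.sqrt ((T1.DD a m s k : ℤ) : ℝ)) (4*k+2-p) := heq
    have e1 : cfA (Real.sqrt ((T1.DD a m s k : ℤ) : ℝ)) (4*k+2)
        = T1.qf a m s k (4*k+2) := by
      rw [hA]
      unfold T1.vv
      rw [if_neg (by omega)]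
      congr 1
      unfold T1.idx
      rw [Nat.mod_eq_of_lt (by omega)]
      omega
    have e2 : cfA (Real.sqrt ((T1.DD a m s k : ℤ) : ℝ)) (4*k+2-p)
        = T1.qf a m s k (4*k+2-p) := by
      rw [hA]
      unfold T1.vv
      rw [if_neg (by omega)]
      congr 1
      unfold T1.idx
      rw [Nat.mod_eq_of_lt (by omega)]
      omega
    have hlt := T1.qf_lt a m s k ha hm hs hk (4*k+2-p) (by omega) (by omega)
    have hcontra : T1.qf a m s k (4*k+2) = T1.qf a m s k (4*k+2-p) :=
      e1.symm.trans (heq'.trans e2)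
    rw [T1.qf_end] at hcontra
    linarith
end

section
/- Let $a > 1$, $m$, $s$, $k$ be positive integers, and set $r = 2ams - 1$, $u = 2a^2 m r^{k-1} - 1$, $v = a$, $w = 2am$, $x = (a r^k - s)/(2a)$. Then for each integer $n$ with $0 \le n \le k-1$, the matrix $\begin{pmatrix} u & r^{k-1-n} v \\ r^n w & ru - 2vwx \end{pmatrix}$ equals $\begin{pmatrix} a r^{k-1-n} - 1 & 1 \\ 1 & 0 \end{pmatrix} \begin{pmatrix} 1 & 1 \\ 1 & 0 \end{pmatrix} \begin{pmatrix} 2am\, r^n - 1 & 1 \\ 1 & 0 \end{pmatrix}$. -/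
/-- the three-term factorization of the matrices `N_n` used to
prove Theorem t1a (with `r = 2ams - 1`). -/
theorem Nn_factorization_t1a (a m s k : ℕ) (ha : 1 < a) (hm : 0 < m)
    (hs : 0 < s) (hk : 1 ≤ k) (n : ℕ) (hn : n ≤ k - 1) :
    let r : ℚ := 2 * a * m * s - 1
    let u : ℚ := 2 * (a : ℚ) ^ 2 * m * r ^ (k - 1) - 1
    let v : ℚ := a
    let w : ℚ := 2 * a * m
    let x : ℚ := ((a : ℚ) * r ^ k - s) / (2 * a)
    (!![u, r ^ (k - 1 - n) * v; r ^ n * w, r * u - 2 * v * w * x] :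
        Matrix (Fin 2) (Fin 2) ℚ) =
      !![(a : ℚ) * r ^ (k - 1 - n) - 1, 1; 1, 0] * !![1, 1; 1, 0] *
        !![2 * (a : ℚ) * m * r ^ n - 1, 1; 1, 0] := by
  intro r u v w x
  have ha0 : (a : ℚ) ≠ 0 := by positivity
  have hr : r = 2 * a * m * s - 1 := rfl
  have hu : u = 2 * (a : ℚ) ^ 2 * m * r ^ (k - 1) - 1 := rfl
  have hv : v = (a : ℚ) := rfl
  have hw : w = 2 * (a : ℚ) * m := rfl
  have hx : x = ((a : ℚ) * r ^ k - s) / (2 * a) := rfl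
  have h1 : r ^ (k - 1 - n) * r ^ n = r ^ (k - 1) := by
    rw [← pow_add]; congr 1; omega
  have h2 : r ^ k = r * r ^ (k - 1) := by
    rw [← pow_succ']; congr 1; omega
  clear_value r u v w x
  ext i j
  fin_cases i <;> fin_cases j <;>
    simp [Matrix.mul_apply, Fin.sum_univ_succ, hu, hv, hw, hx, h2]
  all_goals try ring
  · linear_combination (-2 : ℚ) * (a : ℚ) ^ 2 * m * h1
  · have hy : ((a : ℚ) * (r * r ^ (k - 1)) - s) / (2 * a) * (2 * a) =
        (a : ℚ) * (r * r ^ (k - 1)) - s :=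
      div_mul_cancel₀ _ (by positivity)
    linear_combination (-2 * (a : ℚ) * m) * hy + (-1 : ℚ) * hr
end

section
/- Let $a > 1$, $m$, $s$, $k$ be positive integers and set $D = m\big(2(2ams - 1)^k + m(s - a(2ams - 1)^k)^2\big)$. Then $D$ is not a perfect square and the fundamental period of the regular continued fraction expansion of $\sqrt{D}$ has length $6k + 2$. -/
namespace PeriodT1a

/-- `r = 2ams - 1`. -/
def rr (a m s : ℤ) : ℤ := 2*a*m*s - 1

/-- `P`-values over the first half of the period, `j ∈ [1, 3k+1]`. -/
def pp1 (a m s : ℤ) (k j : ℕ) : ℤ :=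
  if (j-1) % 3 = 0 then m*(a*(rr a m s)^k - s)
  else if (j-1) % 3 = 1 then m*(a*(rr a m s)^k + s) - 2*m*(rr a m s)^(k-(j-1)/3)
  else m*(a*(rr a m s)^k + s) - (rr a m s)^((j-1)/3+1)

/-- `Q`-values over the first half of the period. -/
def qq1 (a m s : ℤ) (k j : ℕ) : ℤ :=
  if (j-1) % 3 = 0 then 2*m*(rr a m s)^(k-(j-1)/3)
  else if (j-1) % 3 = 1 then
    2*m*(a*(rr a m s)^k + s - (rr a m s)^(k-(j-1)/3)) - (rr a m s)^((j-1)/3+1)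
  else (rr a m s)^((j-1)/3+1)

/-- partial quotients over the first half of the period. -/
def aa1 (a m s : ℤ) (k j : ℕ) : ℤ :=
  if j = 3*k+1 then a*(rr a m s)^k - s
  else if (j-1) % 3 = 0 then a*(rr a m s)^((j-1)/3) - 1
  else if (j-1) % 3 = 1 then 1
  else 2*a*m*(rr a m s)^(k-1-(j-1)/3) - 1

def pp (a m s : ℤ) (k n : ℕ) : ℤ :=
  if n % (6*k+2) = 0 then m*(a*(rr a m s)^k - s)
  else if n % (6*k+2) ≤ 3*k+1 then pp1 a m s k (n % (6*k+2))
  else pp1 a m s k (6*k+3 - n % (6*k+2))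

def qq (a m s : ℤ) (k n : ℕ) : ℤ :=
  if n % (6*k+2) = 0 then 1
  else if n % (6*k+2) ≤ 3*k+1 then qq1 a m s k (n % (6*k+2))
  else qq1 a m s k (6*k+2 - n % (6*k+2))

def aa (a m s : ℤ) (k n : ℕ) : ℤ :=
  if n % (6*k+2) = 0 then 2*m*(a*(rr a m s)^k - s)
  else if n % (6*k+2) ≤ 3*k+1 then aa1 a m s k (n % (6*k+2))
  else aa1 a m s k (6*k+2 - n % (6*k+2))

section evals
variable (a m s : ℤ) (k i : ℕ)

lemma pp1_eval0 (j : ℕ) (h : j = 3*i+1) : pp1 a m s k j = m*(a*(rr a m s)^k - s) := by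
  subst h
  have h1 : (3*i) % 3 = 0 := by omega
  simp [pp1, h1]

lemma pp1_eval1 (j : ℕ) (h : j = 3*i+2) :
    pp1 a m s k j = m*(a*(rr a m s)^k + s) - 2*m*(rr a m s)^(k-i) := by
  subst h
  have h1 : (3*i+1) % 3 = 1 := by omega
  have h2 : (3*i+1) / 3 = i := by omega
  simp [pp1, h1, h2]

lemma pp1_eval2 (j : ℕ) (h : j = 3*i+3) :
    pp1 a m s k j = m*(a*(rr a m s)^k + s) - (rr a m s)^(i+1) := by
  subst h
  have h1 : (3*i+2) % 3 = 2 := by omega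
  have h2 : (3*i+2) / 3 = i := by omega
  simp [pp1, h1, h2]

lemma qq1_eval0 (j : ℕ) (h : j = 3*i+1) : qq1 a m s k j = 2*m*(rr a m s)^(k-i) := by
  subst h
  have h1 : (3*i) % 3 = 0 := by omega
  have h2 : (3*i) / 3 = i := by omega
  simp [qq1, h1, h2]

lemma qq1_eval1 (j : ℕ) (h : j = 3*i+2) : qq1 a m s k j
    = 2*m*(a*(rr a m s)^k + s - (rr a m s)^(k-i)) - (rr a m s)^(i+1) := by
  subst h
  have h1 : (3*i+1) % 3 = 1 := by omega
  have h2 : (3*i+1) / 3 = i := by omega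
  simp [qq1, h1, h2]

lemma qq1_eval2 (j : ℕ) (h : j = 3*i+3) : qq1 a m s k j = (rr a m s)^(i+1) := by
  subst h
  have h1 : (3*i+2) % 3 = 2 := by omega
  have h2 : (3*i+2) / 3 = i := by omega
  simp [qq1, h1, h2]

lemma aa1_eval0 (hik : i ≠ k) (j : ℕ) (h : j = 3*i+1) :
    aa1 a m s k j = a*(rr a m s)^i - 1 := by
  subst h
  have h0 : ¬(3*i+1 = 3*k+1) := by omega
  have h1 : (3*i) % 3 = 0 := by omega
  have h2 : (3*i) / 3 = i := by omega
  simp [aa1, h0, h1, h2, hik]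

lemma aa1_evalmid (j : ℕ) (h : j = 3*k+1) : aa1 a m s k j = a*(rr a m s)^k - s := by
  subst h; simp [aa1]

lemma aa1_eval1 (j : ℕ) (h : j = 3*i+2) : aa1 a m s k j = 1 := by
  subst h
  have h0 : ¬(3*i+2 = 3*k+1) := by omega
  have h1 : (3*i+1) % 3 = 1 := by omega
  simp [aa1, h0, h1]

lemma aa1_eval2 (j : ℕ) (h : j = 3*i+3) :
    aa1 a m s k j = 2*a*m*(rr a m s)^(k-1-i) - 1 := by
  subst h
  have h0 : ¬(3*i+3 = 3*k+1) := by omega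
  have h1 : (3*i+2) % 3 = 2 := by omega
  have h2 : (3*i+2) / 3 = i := by omega
  simp [aa1, h0, h1, h2]

end evals

set_option maxHeartbeats 1000000 in
/-- The master lemma: the explicit data `(pp, qq, aa)` satisfies the
continued-fraction recursion for `√D`, including floor inequalities. -/
lemma master (a m s : ℤ) (k : ℕ) (ha : 2 ≤ a) (hm : 1 ≤ m) (hs : 1 ≤ s)
    (hk : 1 ≤ k) (n : ℕ) :
    0 < qq a m s k n ∧
    aa a m s k n * qq a m s k n ≤ m*(a*(rr a m s)^k - s) + pp a m s k n ∧
    m*(a*(rr a m s)^k - s) + pp a m s k n + 1 ≤ (aa a m s k n + 1) * qq a m s k n ∧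
    pp a m s k (n+1) = aa a m s k n * qq a m s k n - pp a m s k n ∧
    qq a m s k n * qq a m s k (n+1)
      = m*(2*(rr a m s)^k + m*(s - a*(rr a m s)^k)^2) - (pp a m s k (n+1))^2 := by
  have hRv : rr a m s = 2*a*m*s - 1 := rfl
  have hms1 : (1:ℤ) ≤ m*s := by
    nlinarith [mul_nonneg (sub_nonneg.2 hm) (sub_nonneg.2 hs)]
  have ham : (2:ℤ) ≤ a*m := by
    nlinarith [mul_nonneg (sub_nonneg.2 ha) (sub_nonneg.2 hm)]
  have hamsle : a*m + 2*s - 2 ≤ a*m*s := by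
    nlinarith [mul_nonneg (sub_nonneg.2 ham) (sub_nonneg.2 hs)]
  have h3R : 3 ≤ rr a m s := by rw [hRv]; nlinarith [hamsle]
  have hsR : s + 1 ≤ rr a m s := by rw [hRv]; nlinarith [hamsle]
  have hmsR : 2*m*s + 1 ≤ rr a m s := by
    rw [hRv]
    nlinarith [mul_nonneg (sub_nonneg.2 hms1) (show (0:ℤ) ≤ a - 1 by linarith)]
  have h1R : (1:ℤ) ≤ rr a m s := by linarith
  have hRpos : (0:ℤ) < rr a m s := by linarith
  obtain ⟨j0, hj0⟩ : ∃ j0, n % (6*k+2) = j0 := ⟨_, rfl⟩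
  have hj0lt : j0 < 6*k+2 := hj0 ▸ Nat.mod_lt _ (by omega)
  have hsucc : (n+1) % (6*k+2) = if j0 = 6*k+1 then 0 else j0 + 1 := by
    rw [Nat.add_mod, hj0, Nat.mod_eq_of_lt (show 1 < 6*k+2 by omega)]
    split
    · next h => rw [h, show 6*k+1+1 = 6*k+2 by omega, Nat.mod_self]
    · next h => exact Nat.mod_eq_of_lt (by omega)
  rcases eq_or_ne j0 0 with h0 | h0
  · -- CASE j0 = 0
    subst h0
    have hsucc' : (n+1) % (6*k+2) = 1 := by rw [hsucc, if_neg (by omega)]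
    have ePn : pp a m s k n = m*(a*(rr a m s)^k - s) := by
      simp [pp, hj0]
    have eQn : qq a m s k n = 1 := by simp [qq, hj0]
    have eAn : aa a m s k n = 2*m*(a*(rr a m s)^k - s) := by simp [aa, hj0]
    have ePn1 : pp a m s k (n+1) = m*(a*(rr a m s)^k - s) := by
      simp only [pp, hsucc']
      rw [if_neg (by omega), if_pos (by omega)]
      exact pp1_eval0 a m s k 0 _ (by omega)
    have eQn1 : qq a m s k (n+1) = 2*m*(rr a m s)^k := by
      simp only [qq, hsucc']
      rw [if_neg (by omega), if_pos (by omega)]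
      rw [qq1_eval0 a m s k 0 _ (by omega), Nat.sub_zero]
    rw [ePn, eQn, eAn, ePn1, eQn1]
    refine ⟨one_pos, le_of_eq (by ring), le_of_eq (by ring), by ring, by ring⟩
  rcases le_or_gt j0 (3*k+1) with hfst | hsnd
  · -- FIRST HALF : 1 ≤ j0 ≤ 3k+1
    rcases eq_or_ne j0 (3*k+1) with hmid | hmid
    · -- CASE middle j0 = 3k+1
      subst hmid
      have hsucc' : (n+1) % (6*k+2) = 3*k+2 := by
        rw [hsucc, if_neg (by omega)]
      have ePn : pp a m s k n = m*(a*(rr a m s)^k - s) := by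
        simp only [pp, hj0]
        rw [if_neg (by omega), if_pos (by omega)]
        exact pp1_eval0 a m s k k _ (by omega)
      have eQn : qq a m s k n = 2*m := by
        simp only [qq, hj0]
        rw [if_neg (by omega), if_pos (by omega)]
        rw [qq1_eval0 a m s k k _ (by omega), Nat.sub_self, pow_zero, mul_one]
      have eAn : aa a m s k n = a*(rr a m s)^k - s := by
        simp only [aa, hj0]
        rw [if_neg (by omega), if_pos (by omega)]
        exact aa1_evalmid a m s k _ (by omega)
      have ePn1 : pp a m s k (n+1) = m*(a*(rr a m s)^k - s) := by
        simp only [pp, hsucc']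
        rw [if_neg (by omega), if_neg (by omega)]
        exact pp1_eval0 a m s k k _ (by omega)
      have eQn1 : qq a m s k (n+1) = (rr a m s)^k := by
        simp only [qq, hsucc']
        rw [if_neg (by omega), if_neg (by omega)]
        rw [qq1_eval2 a m s k (k-1) _ (by omega), show k-1+1 = k by omega]
      rw [ePn, eQn, eAn, ePn1, eQn1]
      refine ⟨by linarith, le_of_eq (by ring), by linarith, by ring, by ring⟩
    -- decompose j0 - 1 = 3i + c
    obtain ⟨i, c, hc3, hdec⟩ : ∃ i c, c < 3 ∧ j0 = 3*i + c + 1 :=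
      ⟨(j0-1)/3, (j0-1)%3, by omega, by omega⟩
    have hik : i < k := by omega
    have hT : (rr a m s)^k = (rr a m s)^i * (rr a m s)^(k-i) := by
      rw [← pow_add]; congr 1; omega
    have hRY : rr a m s ≤ (rr a m s)^(k-i) := by
      calc rr a m s = (rr a m s)^1 := (pow_one _).symm
      _ ≤ _ := pow_le_pow_right₀ h1R (by omega)
    have hYs : (s:ℤ) ≤ (rr a m s)^(k-i) := by linarith
    have hX1 : (1:ℤ) ≤ (rr a m s)^i := one_le_pow₀ h1R
    have hY1 : (1:ℤ) ≤ (rr a m s)^(k-i) := one_le_pow₀ h1R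
    have hXY_Y : (rr a m s)^(k-i) ≤ (rr a m s)^i * (rr a m s)^(k-i) :=
      le_mul_of_one_le_left (by linarith) hX1
    have hXY0 : (0:ℤ) ≤ (rr a m s)^i * (rr a m s)^(k-i) :=
      mul_nonneg (by linarith) (by linarith)
    have ha2XY : (0:ℤ) ≤ (a-2)*((rr a m s)^i * (rr a m s)^(k-i)) :=
      mul_nonneg (by linarith) hXY0
    have hsucc' : (n+1) % (6*k+2) = j0 + 1 := by rw [hsucc, if_neg (by omega)]
    interval_cases c
    · -- CASE first half, c = 0 : j0 = 3i+1, i < k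
      have ePn : pp a m s k n = m*(a*(rr a m s)^k - s) := by
        simp only [pp, hj0]
        rw [if_neg (by omega), if_pos (by omega)]
        exact pp1_eval0 a m s k i _ (by omega)
      have eQn : qq a m s k n = 2*m*(rr a m s)^(k-i) := by
        simp only [qq, hj0]
        rw [if_neg (by omega), if_pos (by omega)]
        exact qq1_eval0 a m s k i _ (by omega)
      have eAn : aa a m s k n = a*(rr a m s)^i - 1 := by
        simp only [aa, hj0]
        rw [if_neg (by omega), if_pos (by omega)]
        exact aa1_eval0 a m s k i (by omega) _ (by omega)
      have ePn1 : pp a m s k (n+1)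
          = m*(a*(rr a m s)^k + s) - 2*m*(rr a m s)^(k-i) := by
        simp only [pp, hsucc']
        rw [if_neg (by omega), if_pos (by omega)]
        exact pp1_eval1 a m s k i _ (by omega)
      have eQn1 : qq a m s k (n+1)
          = 2*m*(a*(rr a m s)^k + s - (rr a m s)^(k-i)) - (rr a m s)^(i+1) := by
        simp only [qq, hsucc']
        rw [if_neg (by omega), if_pos (by omega)]
        exact qq1_eval1 a m s k i _ (by omega)
      rw [ePn, eQn, eAn, ePn1, eQn1, hT, pow_succ]
      have hmYpos : (0:ℤ) < 2*m*(rr a m s)^(k-i) := by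
        have := mul_pos (show (0:ℤ) < m by linarith) (pow_pos hRpos (k-i))
        linarith
      refine ⟨hmYpos, ?_, ?_, by ring, by rw [hRv]; ring⟩
      · have h2 : (0:ℤ) ≤ m*((rr a m s)^(k-i) - s) :=
          mul_nonneg (by linarith) (by linarith)
        linarith [h2]
      · linarith [hms1]
    · -- CASE first half, c = 1 : j0 = 3i+2, i < k
      have hR_XR : rr a m s ≤ (rr a m s)^i * rr a m s :=
        le_mul_of_one_le_left (by linarith) hX1
      have hXR_XY : (rr a m s)^i * rr a m s ≤ (rr a m s)^i * (rr a m s)^(k-i) :=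
        mul_le_mul_of_nonneg_left hRY (by linarith)
      have hmm2 : (0:ℤ) ≤ (m-1)*(a*((rr a m s)^i * (rr a m s)^(k-i)) + s
          - (rr a m s)^(k-i)) :=
        mul_nonneg (by linarith) (by linarith [hXY_Y, ha2XY, hXY0])
      have ePn : pp a m s k n
          = m*(a*(rr a m s)^k + s) - 2*m*(rr a m s)^(k-i) := by
        simp only [pp, hj0]
        rw [if_neg (by omega), if_pos (by omega)]
        exact pp1_eval1 a m s k i _ (by omega)
      have eQn : qq a m s k n
          = 2*m*(a*(rr a m s)^k + s - (rr a m s)^(k-i)) - (rr a m s)^(i+1) := by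
        simp only [qq, hj0]
        rw [if_neg (by omega), if_pos (by omega)]
        exact qq1_eval1 a m s k i _ (by omega)
      have eAn : aa a m s k n = 1 := by
        simp only [aa, hj0]
        rw [if_neg (by omega), if_pos (by omega)]
        exact aa1_eval1 a m s k i _ (by omega)
      have ePn1 : pp a m s k (n+1) = m*(a*(rr a m s)^k + s) - (rr a m s)^(i+1) := by
        simp only [pp, hsucc']
        rw [if_neg (by omega), if_pos (by omega)]
        exact pp1_eval2 a m s k i _ (by omega)
      have eQn1 : qq a m s k (n+1) = (rr a m s)^(i+1) := by
        simp only [qq, hsucc']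
        rw [if_neg (by omega), if_pos (by omega)]
        exact qq1_eval2 a m s k i _ (by omega)
      rw [ePn, eQn, eAn, ePn1, eQn1, hT, pow_succ]
      refine ⟨?_, ?_, ?_, by ring, by rw [hRv]; ring⟩
      · linarith [hmm2, hXR_XY, ha2XY, hXY_Y]
      · linarith [hR_XR, hmsR]
      · linarith [hmm2, hXR_XY, ha2XY, hXY_Y, hms1]
    · -- CASE first half, c = 2 : j0 = 3i+3, i < k
      have hT' : (rr a m s)^k = (rr a m s)^(i+1) * (rr a m s)^(k-1-i) := by
        rw [← pow_add]; congr 1; omega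
      have hX'1 : (1:ℤ) ≤ (rr a m s)^(i+1) := one_le_pow₀ h1R
      have ePn : pp a m s k n = m*(a*(rr a m s)^k + s) - (rr a m s)^(i+1) := by
        simp only [pp, hj0]
        rw [if_neg (by omega), if_pos (by omega)]
        exact pp1_eval2 a m s k i _ (by omega)
      have eQn : qq a m s k n = (rr a m s)^(i+1) := by
        simp only [qq, hj0]
        rw [if_neg (by omega), if_pos (by omega)]
        exact qq1_eval2 a m s k i _ (by omega)
      have eAn : aa a m s k n = 2*a*m*(rr a m s)^(k-1-i) - 1 := by
        simp only [aa, hj0]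
        rw [if_neg (by omega), if_pos (by omega)]
        exact aa1_eval2 a m s k i _ (by omega)
      have ePn1 : pp a m s k (n+1) = m*(a*(rr a m s)^k - s) := by
        simp only [pp, hsucc']
        rw [if_neg (by omega), if_pos (by omega)]
        exact pp1_eval0 a m s k (i+1) _ (by omega)
      have eQn1 : qq a m s k (n+1) = 2*m*(rr a m s)^(k-1-i) := by
        simp only [qq, hsucc']
        rw [if_neg (by omega), if_pos (by omega)]
        rw [qq1_eval0 a m s k (i+1) _ (by omega), show k-(i+1) = k-1-i by omega]
      rw [ePn, eQn, eAn, ePn1, eQn1, hT']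
      have hY'1 : (1:ℤ) ≤ (rr a m s)^(k-1-i) := one_le_pow₀ h1R
      refine ⟨by linarith, le_of_eq (by ring), ?_, by ring, by ring⟩
      linarith [hX'1]
  · -- SECOND HALF : 3k+2 ≤ j0 ≤ 6k+1
    obtain ⟨i, c, hc3, hdec, hile⟩ :
        ∃ i c, c < 3 ∧ 6*k+2 - j0 = 3*i + c + 1 ∧ i < k :=
      ⟨(6*k+2-j0-1)/3, (6*k+2-j0-1)%3, by omega, by omega, by omega⟩
    have hT : (rr a m s)^k = (rr a m s)^i * (rr a m s)^(k-i) := by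
      rw [← pow_add]; congr 1; omega
    have hRY : rr a m s ≤ (rr a m s)^(k-i) := by
      calc rr a m s = (rr a m s)^1 := (pow_one _).symm
      _ ≤ _ := pow_le_pow_right₀ h1R (by omega)
    have hYs : (s:ℤ) ≤ (rr a m s)^(k-i) := by linarith
    have hX1 : (1:ℤ) ≤ (rr a m s)^i := one_le_pow₀ h1R
    have hY1 : (1:ℤ) ≤ (rr a m s)^(k-i) := one_le_pow₀ h1R
    have hXY_Y : (rr a m s)^(k-i) ≤ (rr a m s)^i * (rr a m s)^(k-i) :=
      le_mul_of_one_le_left (by linarith) hX1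
    have hXY0 : (0:ℤ) ≤ (rr a m s)^i * (rr a m s)^(k-i) :=
      mul_nonneg (by linarith) (by linarith)
    have ha2XY : (0:ℤ) ≤ (a-2)*((rr a m s)^i * (rr a m s)^(k-i)) :=
      mul_nonneg (by linarith) hXY0
    interval_cases c
    · -- CASE second half, c = 0 : j0 = 6k+1-3i  (wrap when i = 0)
      have ePn : pp a m s k n
          = m*(a*(rr a m s)^k + s) - 2*m*(rr a m s)^(k-i) := by
        simp only [pp, hj0]
        rw [if_neg (by omega), if_neg (by omega)]
        exact pp1_eval1 a m s k i _ (by omega)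
      have eQn : qq a m s k n = 2*m*(rr a m s)^(k-i) := by
        simp only [qq, hj0]
        rw [if_neg (by omega), if_neg (by omega)]
        exact qq1_eval0 a m s k i _ (by omega)
      have eAn : aa a m s k n = a*(rr a m s)^i - 1 := by
        simp only [aa, hj0]
        rw [if_neg (by omega), if_neg (by omega)]
        exact aa1_eval0 a m s k i (by omega) _ (by omega)
      have ePn1 : pp a m s k (n+1) = m*(a*(rr a m s)^k - s) := by
        rcases eq_or_ne i 0 with hi0 | hi0
        · have hsucc' : (n+1) % (6*k+2) = 0 := by rw [hsucc, if_pos (by omega)]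
          simp [pp, hsucc']
        · have hsucc' : (n+1) % (6*k+2) = j0+1 := by rw [hsucc, if_neg (by omega)]
          simp only [pp, hsucc']
          rw [if_neg (by omega), if_neg (by omega)]
          exact pp1_eval0 a m s k i _ (by omega)
      have eQn1 : qq a m s k (n+1) = (rr a m s)^i := by
        rcases eq_or_ne i 0 with hi0 | hi0
        · have hsucc' : (n+1) % (6*k+2) = 0 := by rw [hsucc, if_pos (by omega)]
          rw [hi0, pow_zero]
          simp [qq, hsucc']
        · have hsucc' : (n+1) % (6*k+2) = j0+1 := by rw [hsucc, if_neg (by omega)]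
          simp only [qq, hsucc']
          rw [if_neg (by omega), if_neg (by omega)]
          rw [qq1_eval2 a m s k (i-1) _ (by omega), show i-1+1 = i by omega]
      rw [ePn, eQn, eAn, ePn1, eQn1, hT]
      have hmY1 : (1:ℤ) ≤ m*(rr a m s)^(k-i) := by
        nlinarith [mul_nonneg (sub_nonneg.2 hm) (sub_nonneg.2 hY1)]
      have hmYpos : (0:ℤ) < 2*m*(rr a m s)^(k-i) := by linarith
      refine ⟨hmYpos, le_of_eq (by ring), by linarith [hmY1], by ring, by ring⟩
    · -- CASE second half, c = 1 : j0 = 6k-3i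
      have hsucc' : (n+1) % (6*k+2) = j0+1 := by rw [hsucc, if_neg (by omega)]
      have hR_XR : rr a m s ≤ (rr a m s)^i * rr a m s :=
        le_mul_of_one_le_left (by linarith) hX1
      have hXR_XY : (rr a m s)^i * rr a m s ≤ (rr a m s)^i * (rr a m s)^(k-i) :=
        mul_le_mul_of_nonneg_left hRY (by linarith)
      have hmm2 : (0:ℤ) ≤ (m-1)*(a*((rr a m s)^i * (rr a m s)^(k-i)) + s
          - (rr a m s)^(k-i)) :=
        mul_nonneg (by linarith) (by linarith [hXY_Y, ha2XY, hXY0])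
      have ePn : pp a m s k n = m*(a*(rr a m s)^k + s) - (rr a m s)^(i+1) := by
        simp only [pp, hj0]
        rw [if_neg (by omega), if_neg (by omega)]
        exact pp1_eval2 a m s k i _ (by omega)
      have eQn : qq a m s k n
          = 2*m*(a*(rr a m s)^k + s - (rr a m s)^(k-i)) - (rr a m s)^(i+1) := by
        simp only [qq, hj0]
        rw [if_neg (by omega), if_neg (by omega)]
        exact qq1_eval1 a m s k i _ (by omega)
      have eAn : aa a m s k n = 1 := by
        simp only [aa, hj0]
        rw [if_neg (by omega), if_neg (by omega)]
        exact aa1_eval1 a m s k i _ (by omega)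
      have ePn1 : pp a m s k (n+1)
          = m*(a*(rr a m s)^k + s) - 2*m*(rr a m s)^(k-i) := by
        simp only [pp, hsucc']
        rw [if_neg (by omega), if_neg (by omega)]
        exact pp1_eval1 a m s k i _ (by omega)
      have eQn1 : qq a m s k (n+1) = 2*m*(rr a m s)^(k-i) := by
        simp only [qq, hsucc']
        rw [if_neg (by omega), if_neg (by omega)]
        exact qq1_eval0 a m s k i _ (by omega)
      rw [ePn, eQn, eAn, ePn1, eQn1, hT, pow_succ]
      refine ⟨?_, ?_, ?_, by ring, by rw [hRv]; ring⟩
      · linarith [hmm2, hXR_XY, ha2XY, hXY_Y]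
      · have h2 : (0:ℤ) ≤ m*((rr a m s)^(k-i) - s) :=
          mul_nonneg (by linarith) (by linarith)
        linarith [h2]
      · -- mu + P + 1 ≤ 2Q : split on i = 0
        rcases eq_or_ne i 0 with hi0 | hi0
        · subst hi0
          have hs2 : (0:ℤ) ≤ (m*(a-2))*((rr a m s)^(k-0) - s) :=
            mul_nonneg (mul_nonneg (by linarith) (by linarith)) (by linarith)
          simp only [pow_zero] at *
          rw [hRv] at *
          nlinarith [hs2]
        · have hRX : rr a m s ≤ (rr a m s)^i := by
            calc rr a m s = (rr a m s)^1 := (pow_one _).symm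
            _ ≤ _ := pow_le_pow_right₀ h1R (by omega)
          have h2Y : 2*(rr a m s)^(k-i) ≤ (rr a m s)^i * (rr a m s)^(k-i) := by
            nlinarith [mul_nonneg (show (0:ℤ) ≤ (rr a m s)^i - 2 by linarith [hRX])
              (show (0:ℤ) ≤ (rr a m s)^(k-i) by linarith)]
          have hmm3 : (0:ℤ) ≤ (m-1)*(a*((rr a m s)^i * (rr a m s)^(k-i))
              - 2*(rr a m s)^(k-i)) :=
            mul_nonneg (by linarith) (by linarith [ha2XY, h2Y])
          linarith [hmm3, ha2XY, hXR_XY, h2Y, hms1, hY1]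
    · -- CASE second half, c = 2 : j0 = 6k-1-3i
      have hsucc' : (n+1) % (6*k+2) = j0+1 := by rw [hsucc, if_neg (by omega)]
      have hT' : (rr a m s)^k = (rr a m s)^(i+1) * (rr a m s)^(k-1-i) := by
        rw [← pow_add]; congr 1; omega
      have hY : (rr a m s)^(k-i) = (rr a m s)^(k-1-i) * rr a m s := by
        rw [← pow_succ]; congr 1; omega
      have hX'1 : (1:ℤ) ≤ (rr a m s)^(i+1) := one_le_pow₀ h1R
      have hRX' : rr a m s ≤ (rr a m s)^(i+1) := by
        calc rr a m s = (rr a m s)^1 := (pow_one _).symm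
        _ ≤ _ := pow_le_pow_right₀ h1R (by omega)
      have ePn : pp a m s k n = m*(a*(rr a m s)^k - s) := by
        simp only [pp, hj0]
        rw [if_neg (by omega), if_neg (by omega)]
        exact pp1_eval0 a m s k (i+1) _ (by omega)
      have eQn : qq a m s k n = (rr a m s)^(i+1) := by
        simp only [qq, hj0]
        rw [if_neg (by omega), if_neg (by omega)]
        exact qq1_eval2 a m s k i _ (by omega)
      have eAn : aa a m s k n = 2*a*m*(rr a m s)^(k-1-i) - 1 := by
        simp only [aa, hj0]
        rw [if_neg (by omega), if_neg (by omega)]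
        exact aa1_eval2 a m s k i _ (by omega)
      have ePn1 : pp a m s k (n+1) = m*(a*(rr a m s)^k + s) - (rr a m s)^(i+1) := by
        simp only [pp, hsucc']
        rw [if_neg (by omega), if_neg (by omega)]
        exact pp1_eval2 a m s k i _ (by omega)
      have eQn1 : qq a m s k (n+1)
          = 2*m*(a*(rr a m s)^k + s - (rr a m s)^(k-i)) - (rr a m s)^(i+1) := by
        simp only [qq, hsucc']
        rw [if_neg (by omega), if_neg (by omega)]
        exact qq1_eval1 a m s k i _ (by omega)
      rw [ePn, eQn, eAn, ePn1, eQn1, hT', hY]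
      refine ⟨by linarith, ?_, ?_, by ring, by rw [hRv]; ring⟩
      · linarith [hRX', hmsR]
      · linarith [hms1]


/-- One step of the continued-fraction (Gauss map) algorithm for `√D`. -/
lemma cf_step {D md P Q A P' Q' : ℤ} {x : ℝ}
    (hmd0 : 0 ≤ md) (h1 : md^2 < D) (h2 : D < (md+1)^2)
    (hQ : 0 < Q) (hQ' : 0 < Q')
    (hx : x = (Real.sqrt D + P)/Q)
    (hl : A*Q ≤ md + P) (hu : md + P + 1 ≤ (A+1)*Q)
    (hP' : P' = A*Q - P) (hQQ : Q*Q' = D - P'^2) :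
    ⌊x⌋ = A ∧ (x - ⌊x⌋)⁻¹ = (Real.sqrt D + P')/Q' := by
  have hD0 : (0:ℝ) ≤ (D:ℝ) := by
    have : (0:ℤ) ≤ D := le_of_lt (lt_of_le_of_lt (sq_nonneg md) h1)
    exact_mod_cast this
  have hQR : (0:ℝ) < (Q:ℝ) := by exact_mod_cast hQ
  have hQ'R : (0:ℝ) < (Q':ℝ) := by exact_mod_cast hQ'
  have hsd1 : (md:ℝ) < Real.sqrt D := by
    refine (Real.lt_sqrt (by exact_mod_cast hmd0)).2 ?_
    exact_mod_cast h1
  have hsd2 : Real.sqrt D < (md:ℝ) + 1 := by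
    have h0 : (0:ℝ) < (md:ℝ) + 1 := by
      have : (0:ℤ) < md + 1 := by omega
      exact_mod_cast this
    refine (Real.sqrt_lt' h0).2 ?_
    have : ((D:ℤ):ℝ) < (((md+1)^2 : ℤ):ℝ) := by exact_mod_cast h2
    push_cast at this ⊢
    linarith
  have hfl : ⌊x⌋ = A := by
    rw [Int.floor_eq_iff]
    constructor
    · rw [hx, le_div_iff₀ hQR]
      have : ((A*Q : ℤ):ℝ) ≤ ((md + P : ℤ):ℝ) := by exact_mod_cast hl
      push_cast at this ⊢
      linarith
    · rw [hx, div_lt_iff₀ hQR]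
      have : ((md + P + 1 : ℤ):ℝ) ≤ (((A+1)*Q : ℤ):ℝ) := by exact_mod_cast hu
      push_cast at this ⊢
      linarith
  refine ⟨hfl, ?_⟩
  rw [hfl]
  have hxA : x - (A:ℝ) = (Real.sqrt D - P')/Q := by
    rw [hx, div_sub' (ne_of_gt hQR)]
    congr 1
    have : ((P':ℤ):ℝ) = ((A*Q - P : ℤ):ℝ) := by exact_mod_cast hP'
    push_cast at this ⊢
    linarith
  have hP'lt : ((P':ℤ):ℝ) < Real.sqrt D := by
    have : P' ≤ md := by omega
    have h' : ((P':ℤ):ℝ) ≤ (md:ℝ) := by exact_mod_cast this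
    linarith
  have hpos : (0:ℝ) < Real.sqrt D - P' := by linarith
  rw [hxA, inv_div, div_eq_div_iff (ne_of_gt hpos) (ne_of_gt hQ'R)]
  have hss : Real.sqrt D * Real.sqrt D = (D:ℝ) := Real.mul_self_sqrt hD0
  have hQQ' : ((Q*Q' : ℤ):ℝ) = ((D - P'^2 : ℤ):ℝ) := by exact_mod_cast hQQ
  push_cast at hQQ'
  nlinarith [hss, hQQ']

/-- Bounds locating `√D` between `m(ar^k - s)` and `m(ar^k - s) + 1`. -/
lemma md_bounds (a m s : ℤ) (k : ℕ) (ha : 2 ≤ a) (hm : 1 ≤ m) (hs : 1 ≤ s)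
    (hk : 1 ≤ k) :
    0 ≤ m*(a*(rr a m s)^k - s) ∧
    (m*(a*(rr a m s)^k - s))^2 < m*(2*(rr a m s)^k + m*(s - a*(rr a m s)^k)^2) ∧
    m*(2*(rr a m s)^k + m*(s - a*(rr a m s)^k)^2) < (m*(a*(rr a m s)^k - s)+1)^2 := by
  have hRv : rr a m s = 2*a*m*s - 1 := rfl
  have hms1 : (1:ℤ) ≤ m*s := by
    nlinarith [mul_nonneg (sub_nonneg.2 hm) (sub_nonneg.2 hs)]
  have ham : (2:ℤ) ≤ a*m := by
    nlinarith [mul_nonneg (sub_nonneg.2 ha) (sub_nonneg.2 hm)]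
  have hamsle : a*m + 2*s - 2 ≤ a*m*s := by
    nlinarith [mul_nonneg (sub_nonneg.2 ham) (sub_nonneg.2 hs)]
  have h3R : 3 ≤ rr a m s := by rw [hRv]; nlinarith [hamsle]
  have hsR : s + 1 ≤ rr a m s := by rw [hRv]; nlinarith [hamsle]
  have h1R : (1:ℤ) ≤ rr a m s := by linarith
  have hTR : rr a m s ≤ (rr a m s)^k := by
    calc rr a m s = (rr a m s)^1 := (pow_one _).symm
    _ ≤ _ := pow_le_pow_right₀ h1R (by omega)
  have hc : (0:ℤ) ≤ (a-2)*(rr a m s)^k :=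
    mul_nonneg (by linarith) (by linarith)
  have hu1 : 1 ≤ a*(rr a m s)^k - s := by linarith [hc, hTR, hsR]
  refine ⟨mul_nonneg (by linarith) (by linarith), ?_, ?_⟩
  · have e : m*(2*(rr a m s)^k + m*(s - a*(rr a m s)^k)^2)
        - (m*(a*(rr a m s)^k - s))^2 = 2*m*(rr a m s)^k := by ring
    have hp : (0:ℤ) < 2*m*(rr a m s)^k := by
      have := mul_pos (show (0:ℤ) < m by linarith)
        (show (0:ℤ) < (rr a m s)^k by linarith)
      linarith
    linarith
  · have e : (m*(a*(rr a m s)^k - s)+1)^2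
        - m*(2*(rr a m s)^k + m*(s - a*(rr a m s)^k)^2)
        = 2*(m*((a-1)*(rr a m s)^k - s)) + 1 := by ring
    have hin : (0:ℤ) ≤ m*((a-1)*(rr a m s)^k - s) :=
      mul_nonneg (by linarith) (by linarith [hc, hTR, hsR])
    linarith

/-- The Gauss-map iterates of `√D` are given by the explicit data. -/
lemma cf_data (a m s : ℤ) (k : ℕ) (ha : 2 ≤ a) (hm : 1 ≤ m) (hs : 1 ≤ s)
    (hk : 1 ≤ k) :
    ∀ n : ℕ, 1 ≤ n →
      cfX (Real.sqrt ((m*(2*(rr a m s)^k + m*(s - a*(rr a m s)^k)^2) : ℤ) : ℝ)) n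
        = (Real.sqrt ((m*(2*(rr a m s)^k + m*(s - a*(rr a m s)^k)^2) : ℤ) : ℝ)
            + (pp a m s k n : ℤ)) / (qq a m s k n : ℤ) := by
  obtain ⟨hmd0, hmd1, hmd2⟩ := md_bounds a m s k ha hm hs hk
  intro n hn
  induction n, hn using Nat.le_induction with
  | base =>
    have e1 : pp a m s k 1 = m*(a*(rr a m s)^k - s) := by
      have hj : 1 % (6*k+2) = 1 := Nat.mod_eq_of_lt (by omega)
      simp only [pp, hj]
      rw [if_neg (by omega), if_pos (by omega)]
      exact pp1_eval0 a m s k 0 _ (by omega)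
    have e2 : qq a m s k 1 = 2*m*(rr a m s)^k := by
      have hj : 1 % (6*k+2) = 1 := Nat.mod_eq_of_lt (by omega)
      simp only [qq, hj]
      rw [if_neg (by omega), if_pos (by omega)]
      rw [qq1_eval0 a m s k 0 _ (by omega), Nat.sub_zero]
    have hQ' : (0:ℤ) < 2*m*(rr a m s)^k := by
      have hRv : rr a m s = 2*a*m*s - 1 := rfl
      have hms1 : (1:ℤ) ≤ m*s := by
        nlinarith [mul_nonneg (sub_nonneg.2 hm) (sub_nonneg.2 hs)]
      have h1R : (1:ℤ) ≤ rr a m s := by rw [hRv]; nlinarith [hms1]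
      have := mul_pos (show (0:ℤ) < m by linarith)
        (show (0:ℤ) < (rr a m s)^k by positivity)
      linarith
    have hstep := cf_step (D := m*(2*(rr a m s)^k + m*(s - a*(rr a m s)^k)^2))
      (md := m*(a*(rr a m s)^k - s)) (P := 0) (Q := 1)
      (A := m*(a*(rr a m s)^k - s)) (P' := m*(a*(rr a m s)^k - s))
      (Q' := 2*m*(rr a m s)^k)
      (x := Real.sqrt ((m*(2*(rr a m s)^k + m*(s - a*(rr a m s)^k)^2) : ℤ) : ℝ))
      hmd0 hmd1 hmd2 one_pos hQ' (by push_cast; ring)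
      (by omega) (by omega) (by ring) (by ring)
    simp only [cfX]
    rw [e1, e2]
    exact hstep.2
  | succ n hn ih =>
    obtain ⟨hQ, hl, hu, hP', hQQ⟩ := master a m s k ha hm hs hk n
    have hQ' := (master a m s k ha hm hs hk (n+1)).1
    have hstep := cf_step hmd0 hmd1 hmd2 hQ hQ' ih hl hu hP' hQQ
    simp only [cfX]
    exact hstep.2

/-- The partial quotients of `√D` are given by `aa`. -/
lemma cfA_eq (a m s : ℤ) (k : ℕ) (ha : 2 ≤ a) (hm : 1 ≤ m) (hs : 1 ≤ s)
    (hk : 1 ≤ k) (n : ℕ) (hn : 1 ≤ n) :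
    cfA (Real.sqrt ((m*(2*(rr a m s)^k + m*(s - a*(rr a m s)^k)^2) : ℤ) : ℝ)) n
      = aa a m s k n := by
  obtain ⟨hmd0, hmd1, hmd2⟩ := md_bounds a m s k ha hm hs hk
  obtain ⟨hQ, hl, hu, hP', hQQ⟩ := master a m s k ha hm hs hk n
  have hQ' := (master a m s k ha hm hs hk (n+1)).1
  have hx := cf_data a m s k ha hm hs hk n hn
  exact (cf_step hmd0 hmd1 hmd2 hQ hQ' hx hl hu hP' hQQ).1

/-- All partial quotients at positions not divisible by `6k+2` are strictly
less than the one at positions divisible by `6k+2`. -/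
lemma aa_lt (a m s : ℤ) (k : ℕ) (ha : 2 ≤ a) (hm : 1 ≤ m) (hs : 1 ≤ s)
    (hk : 1 ≤ k) (n : ℕ) (h0 : n % (6*k+2) ≠ 0) :
    aa a m s k n < 2*m*(a*(rr a m s)^k - s) := by
  have hRv : rr a m s = 2*a*m*s - 1 := rfl
  have hms1 : (1:ℤ) ≤ m*s := by
    nlinarith [mul_nonneg (sub_nonneg.2 hm) (sub_nonneg.2 hs)]
  have ham : (2:ℤ) ≤ a*m := by
    nlinarith [mul_nonneg (sub_nonneg.2 ha) (sub_nonneg.2 hm)]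
  have hamsle : a*m + 2*s - 2 ≤ a*m*s := by
    nlinarith [mul_nonneg (sub_nonneg.2 ham) (sub_nonneg.2 hs)]
  have h3R : 3 ≤ rr a m s := by rw [hRv]; nlinarith [hamsle]
  have hsR : s + 1 ≤ rr a m s := by rw [hRv]; nlinarith [hamsle]
  have hmsR : 2*m*s + 1 ≤ rr a m s := by
    rw [hRv]
    nlinarith [mul_nonneg (sub_nonneg.2 hms1) (show (0:ℤ) ≤ a - 1 by linarith)]
  have h1R : (1:ℤ) ≤ rr a m s := by linarith
  have hTR : rr a m s ≤ (rr a m s)^k := by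
    calc rr a m s = (rr a m s)^1 := (pow_one _).symm
    _ ≤ _ := pow_le_pow_right₀ h1R (by omega)
  have hT1 : (1:ℤ) ≤ (rr a m s)^k := one_le_pow₀ h1R
  have hcT : (0:ℤ) ≤ (a-2)*(rr a m s)^k := mul_nonneg (by linarith) (by linarith)
  have hu1 : 1 ≤ a*(rr a m s)^k - s := by linarith [hcT, hTR, hsR]
  have hmm : (0:ℤ) ≤ (2*m-2)*(a*(rr a m s)^k - s) :=
    mul_nonneg (by linarith) (by linarith)
  -- value bounds, for each of the four shapes of partial quotients
  have hv1 : (1:ℤ) < 2*m*(a*(rr a m s)^k - s) := by linarith [hmm, hu1]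
  have hvmid : a*(rr a m s)^k - s < 2*m*(a*(rr a m s)^k - s) := by
    linarith [hmm, hu1]
  have hv0 : ∀ i : ℕ, i ≤ k → a*(rr a m s)^i - 1 < 2*m*(a*(rr a m s)^k - s) := by
    intro i hik
    have hXT : (rr a m s)^i ≤ (rr a m s)^k := pow_le_pow_right₀ h1R hik
    have hX0 : (0:ℤ) ≤ (rr a m s)^i := by positivity
    have haXT : a*(rr a m s)^i ≤ a*(rr a m s)^k :=
      mul_le_mul_of_nonneg_left hXT (by linarith)
    have h2s : 2*s ≤ a*(rr a m s)^k := by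
      have : 2*s + 2 ≤ 2*(rr a m s) := by linarith
      linarith [hcT, hTR]
    linarith [hmm, haXT, h2s, hu1]
  have hv2 : ∀ i : ℕ, i < k →
      2*a*m*(rr a m s)^(k-1-i) - 1 < 2*m*(a*(rr a m s)^k - s) := by
    intro i hik
    have hT' : (rr a m s)^k = (rr a m s)^(i+1) * (rr a m s)^(k-1-i) := by
      rw [← pow_add]; congr 1; omega
    have hY'1 : (1:ℤ) ≤ (rr a m s)^(k-1-i) := one_le_pow₀ h1R
    have hRX' : rr a m s ≤ (rr a m s)^(i+1) := by
      calc rr a m s = (rr a m s)^1 := (pow_one _).symm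
      _ ≤ _ := pow_le_pow_right₀ h1R (by omega)
    have c6 : 1 ≤ a*m*(rr a m s)^(k-1-i) := by
      nlinarith [mul_nonneg (sub_nonneg.2 ham) (sub_nonneg.2 hY'1)]
    have h2 : (0:ℤ) ≤ (a*m*(rr a m s)^(k-1-i) - 1) * ((rr a m s)^(i+1) - 1) :=
      mul_nonneg (by linarith) (by linarith)
    rw [hT']
    nlinarith [h2, hRX', hmsR, hms1]
  obtain ⟨j0, hj0⟩ : ∃ j0, n % (6*k+2) = j0 := ⟨_, rfl⟩
  have hj0lt : j0 < 6*k+2 := hj0 ▸ Nat.mod_lt _ (by omega)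
  have hj00 : j0 ≠ 0 := hj0 ▸ h0
  rcases le_or_gt j0 (3*k+1) with hfst | hsnd
  · rcases eq_or_ne j0 (3*k+1) with hmid | hmid
    · have eAn : aa a m s k n = a*(rr a m s)^k - s := by
        simp only [aa, hj0]
        rw [if_neg (by omega), if_pos (by omega)]
        exact aa1_evalmid a m s k _ (by omega)
      rw [eAn]; exact hvmid
    · obtain ⟨i, c, hc3, hdec⟩ : ∃ i c, c < 3 ∧ j0 = 3*i + c + 1 :=
        ⟨(j0-1)/3, (j0-1)%3, by omega, by omega⟩
      have hik : i < k := by omega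
      interval_cases c
      · have eAn : aa a m s k n = a*(rr a m s)^i - 1 := by
          simp only [aa, hj0]
          rw [if_neg (by omega), if_pos (by omega)]
          exact aa1_eval0 a m s k i (by omega) _ (by omega)
        rw [eAn]; exact hv0 i (by omega)
      · have eAn : aa a m s k n = 1 := by
          simp only [aa, hj0]
          rw [if_neg (by omega), if_pos (by omega)]
          exact aa1_eval1 a m s k i _ (by omega)
        rw [eAn]; exact hv1
      · have eAn : aa a m s k n = 2*a*m*(rr a m s)^(k-1-i) - 1 := by
          simp only [aa, hj0]
          rw [if_neg (by omega), if_pos (by omega)]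
          exact aa1_eval2 a m s k i _ (by omega)
        rw [eAn]; exact hv2 i hik
  · obtain ⟨i, c, hc3, hdec, hile⟩ :
        ∃ i c, c < 3 ∧ 6*k+2 - j0 = 3*i + c + 1 ∧ i < k :=
      ⟨(6*k+2-j0-1)/3, (6*k+2-j0-1)%3, by omega, by omega, by omega⟩
    interval_cases c
    · have eAn : aa a m s k n = a*(rr a m s)^i - 1 := by
        simp only [aa, hj0]
        rw [if_neg (by omega), if_neg (by omega)]
        exact aa1_eval0 a m s k i (by omega) _ (by omega)
      rw [eAn]; exact hv0 i (by omega)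
    · have eAn : aa a m s k n = 1 := by
        simp only [aa, hj0]
        rw [if_neg (by omega), if_neg (by omega)]
        exact aa1_eval1 a m s k i _ (by omega)
      rw [eAn]; exact hv1
    · have eAn : aa a m s k n = 2*a*m*(rr a m s)^(k-1-i) - 1 := by
        simp only [aa, hj0]
        rw [if_neg (by omega), if_neg (by omega)]
        exact aa1_eval2 a m s k i _ (by omega)
      rw [eAn]; exact hv2 i hile


end PeriodT1a

open PeriodT1a in
/-- Theorem 2: for `a > 1` and
`D = m(2(2ams-1)^k + m(s - a(2ams-1)^k)^2)`, `D` is not a perfect square and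
the fundamental period of the continued fraction of `√D` has length `6k + 2`. -/
theorem period_t1a (a m s k : ℕ) (ha : 1 < a) (hm : 0 < m) (hs : 0 < s)
    (hk : 0 < k) :
    let r : ℤ := 2 * a * m * s - 1
    let D : ℤ := m * (2 * r ^ k + m * ((s : ℤ) - a * r ^ k) ^ 2)
    ¬ IsSquare D ∧
      IsLeast {p : ℕ | cfPeriod (Real.sqrt (D : ℝ)) p} (6 * k + 2) := by
  intro r D
  have ha' : (2:ℤ) ≤ (a:ℤ) := by exact_mod_cast ha
  have hm' : (1:ℤ) ≤ (m:ℤ) := by exact_mod_cast hm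
  have hs' : (1:ℤ) ≤ (s:ℤ) := by exact_mod_cast hs
  have hk' : 1 ≤ k := hk
  have hD : D = (m:ℤ) * (2 * rr (a:ℤ) (m:ℤ) (s:ℤ) ^ k
      + (m:ℤ) * ((s:ℤ) - (a:ℤ) * rr (a:ℤ) (m:ℤ) (s:ℤ) ^ k) ^ 2) := rfl
  obtain ⟨hmd0, hmd1, hmd2⟩ := md_bounds (a:ℤ) (m:ℤ) (s:ℤ) k ha' hm' hs' hk'
  constructor
  · -- not a perfect square
    rw [hD]
    rintro ⟨c, hc⟩
    have h1 : |c| * |c| = (m:ℤ) * (2 * rr (a:ℤ) (m:ℤ) (s:ℤ) ^ k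
        + (m:ℤ) * ((s:ℤ) - (a:ℤ) * rr (a:ℤ) (m:ℤ) (s:ℤ) ^ k) ^ 2) := by
      rw [abs_mul_abs_self]; exact hc.symm
    rcases le_or_gt |c| ((m:ℤ)*((a:ℤ)*(rr (a:ℤ) (m:ℤ) (s:ℤ))^k - (s:ℤ))) with h | h
    · have h2 := mul_self_le_mul_self (abs_nonneg c) h
      nlinarith [h1, h2, hmd1]
    · have h2 : (m:ℤ)*((a:ℤ)*(rr (a:ℤ) (m:ℤ) (s:ℤ))^k - (s:ℤ)) + 1 ≤ |c| := by
        omega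
      have h3 := mul_self_le_mul_self (by linarith) h2
      nlinarith [h1, h3, hmd2]
  · constructor
    · -- 6k+2 is a period
      refine ⟨by omega, ?_⟩
      intro n hn
      rw [hD]
      rw [cfA_eq (a:ℤ) (m:ℤ) (s:ℤ) k ha' hm' hs' hk' (n + (6*k+2)) (by omega),
          cfA_eq (a:ℤ) (m:ℤ) (s:ℤ) k ha' hm' hs' hk' n hn]
      have hmod : (n + (6*k+2)) % (6*k+2) = n % (6*k+2) := Nat.add_mod_right _ _
      simp only [aa, hmod]
    · -- minimality
      intro p hp
      obtain ⟨hp0, hper⟩ := hp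
      by_contra hlt
      push_neg at hlt
      have h1 := hper (6*k+2) (by omega)
      rw [hD] at h1
      rw [cfA_eq (a:ℤ) (m:ℤ) (s:ℤ) k ha' hm' hs' hk' (6*k+2+p) (by omega),
          cfA_eq (a:ℤ) (m:ℤ) (s:ℤ) k ha' hm' hs' hk' (6*k+2) (by omega)] at h1
      have e0 : aa (a:ℤ) (m:ℤ) (s:ℤ) k (6*k+2)
          = 2*(m:ℤ)*((a:ℤ)*(rr (a:ℤ) (m:ℤ) (s:ℤ))^k - (s:ℤ)) := by
        simp [aa, Nat.mod_self]
      have hmod : (6*k+2+p) % (6*k+2) = p := by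
        rw [Nat.add_mod_left]
        exact Nat.mod_eq_of_lt hlt
      have hlt2 := aa_lt (a:ℤ) (m:ℤ) (s:ℤ) k ha' hm' hs' hk' (6*k+2+p)
        (by rw [hmod]; omega)
      rw [e0] at h1
      rw [h1] at hlt2
      exact lt_irrefl _ hlt2
end

section
/- Let $m, s, k$ be positive integers with $ms > 1$, and set $D = m\big(2(2ms-1)^k + m(s - (2ms-1)^k)^2\big)$. Then $D$ is a non-square positive integer and the fundamental period of the regular continued fraction expansion of $\sqrt{D}$ has length $6k - 2$. -/
lemma cf_step {D P Q a Q' : ℤ} {d : ℝ} (hd0 : 0 ≤ d) (hd2 : d ^ 2 = (D : ℝ))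
    (hQ : 0 < Q) (hQ' : 0 < Q') (hP' : 0 ≤ a * Q - P)
    (hmul : Q * Q' = D - (a * Q - P) ^ 2)
    (hup : Q' < Q + 2 * (a * Q - P)) :
    ⌊((P : ℝ) + d) / (Q : ℝ)⌋ = a ∧
      (((P : ℝ) + d) / (Q : ℝ) - (a : ℝ))⁻¹ = (((a * Q - P : ℤ) : ℝ) + d) / (Q' : ℝ) := by
  have hsq : (a * Q - P) ^ 2 < D := by nlinarith [mul_pos hQ hQ']
  have hc : D < (Q + (a * Q - P)) ^ 2 := by nlinarith
  have hQR : (0 : ℝ) < (Q : ℝ) := by exact_mod_cast hQ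
  have hQ'R : (0 : ℝ) < (Q' : ℝ) := by exact_mod_cast hQ'
  have hP'R : (0 : ℝ) ≤ (a : ℝ) * Q - P := by exact_mod_cast hP'
  have hP'd : (a : ℝ) * Q - P < d := by
    have h2 : ((a : ℝ) * Q - P) ^ 2 < d ^ 2 := by
      rw [hd2]; exact_mod_cast hsq
    nlinarith
  have hdc : d < (Q : ℝ) + ((a : ℝ) * Q - P) := by
    have h2 : d ^ 2 < ((Q : ℝ) + ((a : ℝ) * Q - P)) ^ 2 := by
      rw [hd2]
      have := hc
      exact_mod_cast this
    nlinarith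
  have hfl : ⌊((P : ℝ) + d) / (Q : ℝ)⌋ = a := by
    rw [Int.floor_eq_iff]
    constructor
    · rw [le_div_iff₀ hQR]; nlinarith
    · rw [div_lt_iff₀ hQR]; nlinarith
  refine ⟨hfl, ?_⟩
  have hx : ((P : ℝ) + d) / (Q : ℝ) - (a : ℝ) = (d - ((a : ℝ) * Q - P)) / Q := by
    field_simp
    ring
  have hd' : (0 : ℝ) < d - ((a : ℝ) * Q - P) := by linarith
  rw [hx, inv_div, div_eq_div_iff hd'.ne' hQ'R.ne']
  have hmulR : (Q : ℝ) * (Q' : ℝ) = (D : ℝ) - ((a : ℝ) * Q - P) ^ 2 := by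
    exact_mod_cast hmul
  push_cast
  nlinarith [hmulR, hd2]

/-- The `(P, Q, a)` data of the continued fraction algorithm for `√D`. -/
def SF (m s k n : ℕ) : ℤ × ℤ × ℤ :=
  let r : ℤ := 2 * (m : ℤ) * s - 1
  let t : ℤ := r ^ k
  let A : ℤ := m * (t - s)
  if n = 0 then (0, 1, A + 1)
  else if n ≤ 3 * k - 1 then
    let q := (n - 1) / 3
    let x : ℤ := r ^ (q + 1)
    let y : ℤ := r ^ (k - 1 - q)
    if (n - 1) % 3 = 0 then (m * (t + s) - x, x, 2 * m * y - 1)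
    else if (n - 1) % 3 = 1 then
      (if n = 3 * k - 1 then (A, 2 * m, t - s) else (A, 2 * m * y, x - 1))
    else (m * (t + s - 2 * y), 2 * m * (y - s) * (x - 1) + x, 1)
  else if n ≤ 6 * k - 3 then
    let i := (n - 3 * k) / 3
    let p : ℤ := r ^ i
    let g : ℤ := r ^ (k - 1 - i)
    if (n - 3 * k) % 3 = 0 then (A, r * g, 2 * m * p - 1)
    else if (n - 3 * k) % 3 = 1 then
      (m * (t + s) - r * g, 2 * m * (r * p - s) * (g - 1) + g, 1)
    else (m * (t + s - 2 * (r * p)), 2 * m * (r * p), g - 1)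
  else (A + 1, 1, 2 * A + 2)

section eval
variable (m s k : ℕ)

local notation "r" => (2 * (m : ℤ) * s - 1)
local notation "t" => (2 * (m : ℤ) * s - 1) ^ k
local notation "A" => (m : ℤ) * (t - s)

lemma SF_zero : SF m s k 0 = (0, 1, A + 1) := by simp [SF]

lemma SF_f0 (q : ℕ) (hq : q + 1 ≤ k) :
    SF m s k (3 * q + 1) = (m * (t + s) - r ^ (q + 1), r ^ (q + 1),
      2 * m * r ^ (k - 1 - q) - 1) := by
  have h1 : ¬(3 * q + 1 = 0) := by omega
  have h2 : 3 * q + 1 ≤ 3 * k - 1 := by omega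
  have h3 : (3 * q + 1 - 1) % 3 = 0 := by omega
  have h4 : (3 * q + 1 - 1) / 3 = q := by omega
  simp +decide only [SF, if_neg h1, if_pos h2, h3, h4, if_pos rfl]
  simp

lemma SF_f1 (q : ℕ) (hq : q + 2 ≤ k) :
    SF m s k (3 * q + 2) = (A, 2 * m * r ^ (k - 1 - q), r ^ (q + 1) - 1) := by
  have h1 : ¬(3 * q + 2 = 0) := by omega
  have h2 : 3 * q + 2 ≤ 3 * k - 1 := by omega
  have h3 : ¬((3 * q + 2 - 1) % 3 = 0) := by omega
  have h3' : (3 * q + 2 - 1) % 3 = 1 := by omega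
  have h4 : (3 * q + 2 - 1) / 3 = q := by omega
  have h5 : ¬(3 * q + 2 = 3 * k - 1) := by omega
  simp +decide only [SF, if_neg h1, if_pos h2, h3', h4, if_neg h3, if_pos rfl, if_neg h5]
  simp

lemma SF_center (hk : 1 ≤ k) :
    SF m s k (3 * k - 1) = (A, 2 * (m : ℤ), t - s) := by
  have h1 : ¬(3 * k - 1 = 0) := by omega
  have h2 : 3 * k - 1 ≤ 3 * k - 1 := le_refl _
  have h3 : ¬((3 * k - 1 - 1) % 3 = 0) := by omega
  have h3' : (3 * k - 1 - 1) % 3 = 1 := by omega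
  simp +decide only [SF, if_neg h1, if_pos h2, h3', if_neg h3, if_pos rfl]
  simp

lemma SF_f2 (q : ℕ) (hq : q + 2 ≤ k) :
    SF m s k (3 * q + 3) = (m * (t + s - 2 * r ^ (k - 1 - q)),
      2 * m * (r ^ (k - 1 - q) - s) * (r ^ (q + 1) - 1) + r ^ (q + 1), 1) := by
  have h1 : ¬(3 * q + 3 = 0) := by omega
  have h2 : 3 * q + 3 ≤ 3 * k - 1 := by omega
  have h3 : ¬((3 * q + 3 - 1) % 3 = 0) := by omega
  have h3' : ¬((3 * q + 3 - 1) % 3 = 1) := by omega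
  have h4 : (3 * q + 3 - 1) / 3 = q := by omega
  simp +decide only [SF, if_neg h1, if_pos h2, h4, if_neg h3, if_neg h3']

lemma SF_s0 (i : ℕ) (hi : i + 1 ≤ k) :
    SF m s k (3 * k + 3 * i) = (A, r * r ^ (k - 1 - i), 2 * m * r ^ i - 1) := by
  have h1 : ¬(3 * k + 3 * i = 0) := by omega
  have h2 : ¬(3 * k + 3 * i ≤ 3 * k - 1) := by omega
  have h2' : 3 * k + 3 * i ≤ 6 * k - 3 := by omega
  have h3 : (3 * k + 3 * i - 3 * k) % 3 = 0 := by omega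
  have h4 : (3 * k + 3 * i - 3 * k) / 3 = i := by omega
  simp +decide only [SF, if_neg h1, if_neg h2, if_pos h2', h3, h4, if_pos rfl]
  simp

lemma SF_s1 (i : ℕ) (hi : i + 2 ≤ k) :
    SF m s k (3 * k + 3 * i + 1) = (m * (t + s) - r * r ^ (k - 1 - i),
      2 * m * (r * r ^ i - s) * (r ^ (k - 1 - i) - 1) + r ^ (k - 1 - i), 1) := by
  have h1 : ¬(3 * k + 3 * i + 1 = 0) := by omega
  have h2 : ¬(3 * k + 3 * i + 1 ≤ 3 * k - 1) := by omega
  have h2' : 3 * k + 3 * i + 1 ≤ 6 * k - 3 := by omega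
  have h3 : ¬((3 * k + 3 * i + 1 - 3 * k) % 3 = 0) := by omega
  have h3' : (3 * k + 3 * i + 1 - 3 * k) % 3 = 1 := by omega
  have h4 : (3 * k + 3 * i + 1 - 3 * k) / 3 = i := by omega
  simp +decide only [SF, if_neg h1, if_neg h2, if_pos h2', h3', h4, if_neg h3, if_pos rfl]
  simp

lemma SF_s2 (i : ℕ) (hi : i + 2 ≤ k) :
    SF m s k (3 * k + 3 * i + 2) = (m * (t + s - 2 * (r * r ^ i)),
      2 * m * (r * r ^ i), r ^ (k - 1 - i) - 1) := by
  have h1 : ¬(3 * k + 3 * i + 2 = 0) := by omega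
  have h2 : ¬(3 * k + 3 * i + 2 ≤ 3 * k - 1) := by omega
  have h2' : 3 * k + 3 * i + 2 ≤ 6 * k - 3 := by omega
  have h3 : ¬((3 * k + 3 * i + 2 - 3 * k) % 3 = 0) := by omega
  have h3' : ¬((3 * k + 3 * i + 2 - 3 * k) % 3 = 1) := by omega
  have h4 : (3 * k + 3 * i + 2 - 3 * k) / 3 = i := by omega
  simp +decide only [SF, if_neg h1, if_neg h2, if_pos h2', h4, if_neg h3, if_neg h3']

lemma SF_last (hk : 1 ≤ k) :
    SF m s k (6 * k - 2) = (A + 1, 1, 2 * A + 2) := by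
  have h1 : ¬(6 * k - 2 = 0) := by omega
  have h2 : ¬(6 * k - 2 ≤ 3 * k - 1) := by omega
  have h2' : ¬(6 * k - 2 ≤ 6 * k - 3) := by omega
  simp +decide only [SF, if_neg h1, if_neg h2, if_neg h2']

end eval

section fam
variable {m s : ℤ} (hm : 1 ≤ m) (hs : 1 ≤ s) (hms : 2 ≤ m * s)

include hm hs hms

lemma hsr : s + 1 ≤ 2 * m * s - 1 := by nlinarith

lemma famC0 {t : ℤ} (ht : 2 * m * s - 1 ≤ t) :
    0 < 2 * m * s - 1 ∧ 0 ≤ m * (t - s) + 1 ∧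
    1 * (2 * m * s - 1) = m * (2 * t + m * (s - t) ^ 2) - (m * (t - s) + 1) ^ 2 ∧
    2 * m * s - 1 < 1 + 2 * (m * (t - s) + 1) ∧
    m * (t - s) + 1 < 2 * (m * (t - s)) + 2 := by
  have h1 := hsr hm hs hms
  refine ⟨by nlinarith, by nlinarith, by ring, by nlinarith, by nlinarith⟩

lemma famC1 {x y : ℤ} (hx : 2 * m * s - 1 ≤ x) (hy : 1 ≤ y) :
    (2 * m * y - 1) * x - (m * (x * y + s) - x) = m * (x * y - s) ∧
    0 < x ∧ 0 < 2 * m * y ∧ 0 ≤ m * (x * y - s) ∧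
    x * (2 * m * y) = m * (2 * (x * y) + m * (s - x * y) ^ 2) - (m * (x * y - s)) ^ 2 ∧
    2 * m * y < x + 2 * (m * (x * y - s)) ∧
    2 * m * y - 1 < 2 * (m * (x * y - s)) + 2 := by
  have h1 := hsr hm hs hms
  have h2 : x * y - y ≥ x - 1 := by nlinarith [(mul_nonneg (by nlinarith : (0:ℤ) ≤ x - 1) (by nlinarith : (0:ℤ) ≤ y - 1))]
  have h3 : m * (x * y - y) ≥ 1 * (x - 1) := by
    calc m * (x * y - y) ≥ 1 * (x * y - y) := by nlinarith
    _ ≥ 1 * (x - 1) := by nlinarith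
  refine ⟨by ring, by nlinarith, by nlinarith, by nlinarith, by ring, by nlinarith, by nlinarith⟩

lemma famC2 {x y : ℤ} (hx : 2 * m * s - 1 ≤ x) (hy : 2 * m * s - 1 ≤ y) :
    (x - 1) * (2 * m * y) - m * (x * y - s) = m * (x * y + s - 2 * y) ∧
    0 < 2 * m * y ∧ 0 < 2 * m * (y - s) * (x - 1) + x ∧
    0 ≤ m * (x * y + s - 2 * y) ∧
    (2 * m * y) * (2 * m * (y - s) * (x - 1) + x)
      = m * (2 * (x * y) + m * (s - x * y) ^ 2) - (m * (x * y + s - 2 * y)) ^ 2 ∧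
    2 * m * (y - s) * (x - 1) + x < 2 * m * y + 2 * (m * (x * y + s - 2 * y)) ∧
    x - 1 < 2 * (m * (x * y - s)) + 2 := by
  have h1 := hsr hm hs hms
  have hys : s + 1 ≤ y := by linarith
  have hx2 : 2 ≤ x := by nlinarith
  have hQ' : 0 < 2 * m * (y - s) * (x - 1) + x := by
    have : 0 ≤ 2 * m * (y - s) * (x - 1) :=
      mul_nonneg (mul_nonneg (by linarith) (by linarith)) (by linarith)
    linarith
  refine ⟨by ring, by nlinarith, hQ',
    by nlinarith [mul_nonneg (by linarith : (0:ℤ) ≤ y) (by linarith : (0:ℤ) ≤ x - 2)],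
    by ring, ?_, ?_⟩
  · have key : 2 * m * y + 2 * (m * (x * y + s - 2 * y)) - (2 * m * (y - s) * (x - 1) + x)
        = x * (2 * m * s - 1) := by ring
    nlinarith
  · nlinarith [(mul_nonneg (by nlinarith : (0:ℤ) ≤ (y-1)) (by nlinarith : (0:ℤ) ≤ x))]

lemma famC2c {t : ℤ} (ht : 2 * m * s - 1 ≤ t) :
    (t - s) * (2 * m) - m * (t - s) = m * (t - s) ∧
    0 < 2 * m ∧ 0 < t ∧ 0 ≤ m * (t - s) ∧
    (2 * m) * t = m * (2 * t + m * (s - t) ^ 2) - (m * (t - s)) ^ 2 ∧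
    t < 2 * m + 2 * (m * (t - s)) ∧
    t - s < 2 * (m * (t - s)) + 2 := by
  have h1 := hsr hm hs hms
  refine ⟨by ring, by nlinarith, by nlinarith, by nlinarith, by ring, by nlinarith, by nlinarith⟩

lemma famC3 {x y : ℤ} (hx : 2 * m * s - 1 ≤ x) (hy : 2 * m * s - 1 ≤ y) :
    1 * (2 * m * (y - s) * (x - 1) + x) - m * (x * y + s - 2 * y)
      = m * (x * y + s) - (2 * m * s - 1) * x ∧
    0 < 2 * m * (y - s) * (x - 1) + x ∧ 0 < (2 * m * s - 1) * x ∧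
    0 ≤ m * (x * y + s) - (2 * m * s - 1) * x ∧
    (2 * m * (y - s) * (x - 1) + x) * ((2 * m * s - 1) * x)
      = m * (2 * (x * y) + m * (s - x * y) ^ 2) - (m * (x * y + s) - (2 * m * s - 1) * x) ^ 2 ∧
    (2 * m * s - 1) * x < (2 * m * (y - s) * (x - 1) + x)
      + 2 * (m * (x * y + s) - (2 * m * s - 1) * x) ∧
    1 < 2 * (m * (x * y - s)) + 2 := by
  have h1 := hsr hm hs hms
  have hys : s + 1 ≤ y := by linarith
  have hx2 : 2 ≤ x := by nlinarith
  have hz : 0 ≤ m * y - (2 * m * s - 1) := by nlinarith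
  have hQ : 0 < 2 * m * (y - s) * (x - 1) + x := by
    have : 0 ≤ 2 * m * (y - s) * (x - 1) :=
      mul_nonneg (mul_nonneg (by linarith) (by linarith)) (by linarith)
    linarith
  refine ⟨by ring, hQ, by nlinarith, by nlinarith, by ring, ?_, by nlinarith⟩
  · have key : (2 * m * (y - s) * (x - 1) + x) + 2 * (m * (x * y + s) - (2 * m * s - 1) * x)
        - (2 * m * s - 1) * x = 2 + (m * y - (2 * m * s - 1)) * (4 * x - 2) := by ring
    nlinarith [mul_nonneg hz (by nlinarith : (0:ℤ) ≤ 4 * x - 2)]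

end fam

section fam2
variable {m s : ℤ} (hm : 1 ≤ m) (hs : 1 ≤ s) (hms : 2 ≤ m * s)
include hm hs hms

lemma famC4 {p g : ℤ} (hp : 1 ≤ p) (hg : 1 ≤ g) :
    (2 * m * p - 1) * ((2 * m * s - 1) * g) - m * ((2 * m * s - 1) * p * g - s)
      = m * ((2 * m * s - 1) * p * g + s) - (2 * m * s - 1) * g ∧
    0 < (2 * m * s - 1) * g ∧
    0 < 2 * m * ((2 * m * s - 1) * p - s) * (g - 1) + g ∧
    0 ≤ m * ((2 * m * s - 1) * p * g + s) - (2 * m * s - 1) * g ∧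
    ((2 * m * s - 1) * g) * (2 * m * ((2 * m * s - 1) * p - s) * (g - 1) + g)
      = m * (2 * ((2 * m * s - 1) * p * g) + m * (s - (2 * m * s - 1) * p * g) ^ 2)
        - (m * ((2 * m * s - 1) * p * g + s) - (2 * m * s - 1) * g) ^ 2 ∧
    2 * m * ((2 * m * s - 1) * p - s) * (g - 1) + g < (2 * m * s - 1) * g
      + 2 * (m * ((2 * m * s - 1) * p * g + s) - (2 * m * s - 1) * g) ∧
    2 * m * p - 1 < 2 * (m * ((2 * m * s - 1) * p * g - s)) + 2 := by
  have h1 := hsr hm hs hms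
  have hR : 0 < 2 * m * s - 1 := by nlinarith
  have hRp : 2 * m * s - 1 ≤ (2 * m * s - 1) * p := by nlinarith
  have hRg : 2 * m * s - 1 ≤ (2 * m * s - 1) * g := by nlinarith
  have hQ' : 0 < 2 * m * ((2 * m * s - 1) * p - s) * (g - 1) + g := by
    have : 0 ≤ 2 * m * ((2 * m * s - 1) * p - s) * (g - 1) :=
      mul_nonneg (mul_nonneg (by linarith) (by linarith)) (by linarith)
    linarith
  have hmp : 1 ≤ m * p := by nlinarith
  have h4 : 0 ≤ m * ((2 * m * s - 1) * p * g + s) - (2 * m * s - 1) * g := by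
    nlinarith [mul_nonneg (by linarith : (0:ℤ) ≤ m * p - 1)
      (by nlinarith : (0:ℤ) ≤ (2 * m * s - 1) * g)]
  refine ⟨by ring, by nlinarith, hQ', h4, by ring, ?_, ?_⟩
  · have key : (2 * m * s - 1) * g
        + 2 * (m * ((2 * m * s - 1) * p * g + s) - (2 * m * s - 1) * g)
        - (2 * m * ((2 * m * s - 1) * p - s) * (g - 1) + g)
        = 2 * m * ((2 * m * s - 1) * p) := by ring
    nlinarith
  · nlinarith [mul_nonneg (by linarith : (0:ℤ) ≤ p - 1)
      (by nlinarith : (0:ℤ) ≤ (2 * m * s - 1) * g - 1)]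

lemma famC5 {p g : ℤ} (hp : 1 ≤ p) (hg : 2 * m * s - 1 ≤ g) :
    1 * (2 * m * ((2 * m * s - 1) * p - s) * (g - 1) + g)
      - (m * ((2 * m * s - 1) * p * g + s) - (2 * m * s - 1) * g)
      = m * ((2 * m * s - 1) * p * g + s - 2 * ((2 * m * s - 1) * p)) ∧
    0 < 2 * m * ((2 * m * s - 1) * p - s) * (g - 1) + g ∧
    0 < 2 * m * ((2 * m * s - 1) * p) ∧
    0 ≤ m * ((2 * m * s - 1) * p * g + s - 2 * ((2 * m * s - 1) * p)) ∧
    (2 * m * ((2 * m * s - 1) * p - s) * (g - 1) + g) * (2 * m * ((2 * m * s - 1) * p))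
      = m * (2 * ((2 * m * s - 1) * p * g) + m * (s - (2 * m * s - 1) * p * g) ^ 2)
        - (m * ((2 * m * s - 1) * p * g + s - 2 * ((2 * m * s - 1) * p))) ^ 2 ∧
    2 * m * ((2 * m * s - 1) * p) < (2 * m * ((2 * m * s - 1) * p - s) * (g - 1) + g)
      + 2 * (m * ((2 * m * s - 1) * p * g + s - 2 * ((2 * m * s - 1) * p))) ∧
    1 < 2 * (m * ((2 * m * s - 1) * p * g - s)) + 2 := by
  have h1 := hsr hm hs hms
  have hR : 0 < 2 * m * s - 1 := by nlinarith
  have hRp : 2 * m * s - 1 ≤ (2 * m * s - 1) * p := by nlinarith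
  have hg3 : 3 ≤ g := by nlinarith
  have hQ : 0 < 2 * m * ((2 * m * s - 1) * p - s) * (g - 1) + g := by
    have : 0 ≤ 2 * m * ((2 * m * s - 1) * p - s) * (g - 1) :=
      mul_nonneg (mul_nonneg (by linarith) (by linarith)) (by linarith)
    linarith
  have h4 : 0 ≤ m * ((2 * m * s - 1) * p * g + s - 2 * ((2 * m * s - 1) * p)) := by
    nlinarith [mul_nonneg (by linarith : (0:ℤ) ≤ (2 * m * s - 1) * p)
      (by linarith : (0:ℤ) ≤ g - 2)]
  refine ⟨by ring, hQ, by nlinarith, h4, by ring, ?_, ?_⟩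
  · have key : (2 * m * ((2 * m * s - 1) * p - s) * (g - 1) + g)
        + 2 * (m * ((2 * m * s - 1) * p * g + s - 2 * ((2 * m * s - 1) * p)))
        - 2 * m * ((2 * m * s - 1) * p)
        = (g - 2) * (4 * m * ((2 * m * s - 1) * p) - 2 * m * s) + g := by ring
    nlinarith [mul_nonneg (by linarith : (0:ℤ) ≤ g - 2)
      (by nlinarith : (0:ℤ) ≤ 4 * m * ((2 * m * s - 1) * p) - 2 * m * s)]
  · nlinarith [mul_pos (by nlinarith : (0:ℤ) < (2 * m * s - 1) * p) (by linarith : (0:ℤ) < g)]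

lemma famC6 {p g : ℤ} (hp : 1 ≤ p) (hg : 1 ≤ g) :
    (g - 1) * (2 * m * ((2 * m * s - 1) * p))
      - m * ((2 * m * s - 1) * p * g + s - 2 * ((2 * m * s - 1) * p))
      = m * ((2 * m * s - 1) * p * g - s) ∧
    0 < 2 * m * ((2 * m * s - 1) * p) ∧ 0 < g ∧
    0 ≤ m * ((2 * m * s - 1) * p * g - s) ∧
    (2 * m * ((2 * m * s - 1) * p)) * g
      = m * (2 * ((2 * m * s - 1) * p * g) + m * (s - (2 * m * s - 1) * p * g) ^ 2)
        - (m * ((2 * m * s - 1) * p * g - s)) ^ 2 ∧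
    g < 2 * m * ((2 * m * s - 1) * p) + 2 * (m * ((2 * m * s - 1) * p * g - s)) ∧
    g - 1 < 2 * (m * ((2 * m * s - 1) * p * g - s)) + 2 := by
  have h1 := hsr hm hs hms
  have hR : 0 < 2 * m * s - 1 := by nlinarith
  have hRp : 2 * m * s - 1 ≤ (2 * m * s - 1) * p := by nlinarith
  have htg : g ≤ (2 * m * s - 1) * p * g := by
    nlinarith [mul_nonneg (by linarith : (0:ℤ) ≤ (2 * m * s - 1) * p - 1) (by linarith : (0:ℤ) ≤ g)]
  have hts : 0 ≤ (2 * m * s - 1) * p * g - s := by nlinarith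
  refine ⟨by ring, by nlinarith, by linarith, by nlinarith, by ring, ?_, ?_⟩
  · nlinarith [mul_nonneg (by linarith : (0:ℤ) ≤ m - 1) hts]
  · nlinarith [mul_nonneg (by linarith : (0:ℤ) ≤ m - 1) hts]

end fam2

section trans
variable (m s k : ℕ)

local notation "R" => (2 * (m : ℤ) * (s : ℤ) - 1)
local notation "DD" => ((m : ℤ) * (2 * R ^ k + (m : ℤ) * ((s : ℤ) - R ^ k) ^ 2))
local notation "AA" => ((m : ℤ) * (R ^ k - (s : ℤ)))

lemma transSF (hm : 0 < m) (hs : 0 < s) (hk : 0 < k) (hms : 1 < m * s)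
    (n : ℕ) (hn : n ≤ 6 * k - 3) :
    (SF m s k (n + 1)).1 = (SF m s k n).2.2 * (SF m s k n).2.1 - (SF m s k n).1 ∧
    0 < (SF m s k n).2.1 ∧ 0 < (SF m s k (n + 1)).2.1 ∧
    0 ≤ (SF m s k (n + 1)).1 ∧
    (SF m s k n).2.1 * (SF m s k (n + 1)).2.1 = DD - (SF m s k (n + 1)).1 ^ 2 ∧
    (SF m s k (n + 1)).2.1 < (SF m s k n).2.1 + 2 * (SF m s k (n + 1)).1 ∧
    (SF m s k n).2.2 < 2 * AA + 2 := by
  have hm1 : 1 ≤ (m : ℤ) := by exact_mod_cast hm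
  have hs1 : 1 ≤ (s : ℤ) := by exact_mod_cast hs
  have hms2 : 2 ≤ (m : ℤ) * (s : ℤ) := by exact_mod_cast hms
  have hsr' : (s : ℤ) + 1 ≤ R := hsr hm1 hs1 hms2
  have hR1 : (1 : ℤ) ≤ R := by linarith
  have hRpow : ∀ j : ℕ, (1 : ℤ) ≤ R ^ j := fun j => one_le_pow₀ hR1
  have hRpow' : ∀ j : ℕ, 1 ≤ j → R ≤ R ^ j := fun j hj => le_self_pow₀ hR1 (by omega)
  by_cases h0 : n = 0
  · subst h0
    obtain ⟨e2, e4, e5, e6, e7⟩ := famC0 hm1 hs1 hms2 (hRpow' k (by omega))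
    rw [SF_zero, show (0 : ℕ) + 1 = 3 * 0 + 1 by norm_num, SF_f0 m s k 0 (by omega)]
    dsimp only
    simp only [zero_add, pow_one, Nat.sub_zero]
    refine ⟨by ring, by norm_num, by linarith, by linarith [e4], by linear_combination e5,
      by linarith [e6], by linarith [e7]⟩
  have h1n : 1 ≤ n := by omega
  by_cases hfh : n ≤ 3 * k - 2
  · rcases (by omega : (n - 1) % 3 = 0 ∨ (n - 1) % 3 = 1 ∨ (n - 1) % 3 = 2) with h3 | h3 | h3
    · -- C1
      obtain ⟨q, hq, rfl⟩ : ∃ q, q + 1 ≤ k ∧ n = 3 * q + 1 := ⟨(n - 1) / 3, by omega, by omega⟩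
      obtain ⟨e1, e2, e3, e4, e5, e6, e7⟩ :=
        famC1 hm1 hs1 hms2 (hRpow' (q + 1) (by omega)) (hRpow (k - 1 - q))
      have ht : R ^ k = R ^ (q + 1) * R ^ (k - 1 - q) := by
        rw [← pow_add]; congr 1; omega
      rw [SF_f0 m s k q hq]
      by_cases hq2 : q + 2 ≤ k
      · rw [show 3 * q + 1 + 1 = 3 * q + 2 from rfl, SF_f1 m s k q hq2]
        dsimp only
        rw [ht]
        exact ⟨by linear_combination e1, e2, e3, e4, by linear_combination e5, e6, e7⟩
      · have hy1 : R ^ (k - 1 - q) = (1 : ℤ) := by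
          rw [show k - 1 - q = 0 by omega, pow_zero]
        rw [show 3 * q + 1 + 1 = 3 * k - 1 by omega, SF_center m s k (by omega)]
        dsimp only
        rw [ht, hy1]
        rw [hy1] at e1 e3 e4 e5 e6 e7
        exact ⟨by linear_combination e1, e2, by linarith [e3], by linarith [e4],
          by linear_combination e5, by linarith [e6], by linarith [e7]⟩
    · -- C2
      obtain ⟨q, hq, rfl⟩ : ∃ q, q + 2 ≤ k ∧ n = 3 * q + 2 := ⟨(n - 1) / 3, by omega, by omega⟩
      obtain ⟨e1, e2, e3, e4, e5, e6, e7⟩ :=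
        famC2 hm1 hs1 hms2 (hRpow' (q + 1) (by omega)) (hRpow' (k - 1 - q) (by omega))
      have ht : R ^ k = R ^ (q + 1) * R ^ (k - 1 - q) := by
        rw [← pow_add]; congr 1; omega
      rw [SF_f1 m s k q hq, show 3 * q + 2 + 1 = 3 * q + 3 from rfl, SF_f2 m s k q hq]
      dsimp only
      rw [ht]
      exact ⟨by linear_combination e1, e2, e3, e4, by linear_combination e5, e6, e7⟩
    · -- C3
      obtain ⟨q, hq, rfl⟩ : ∃ q, q + 2 ≤ k ∧ n = 3 * q + 3 := ⟨(n - 1) / 3, by omega, by omega⟩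
      obtain ⟨e1, e2, e3, e4, e5, e6, e7⟩ :=
        famC3 hm1 hs1 hms2 (hRpow' (q + 1) (by omega)) (hRpow' (k - 1 - q) (by omega))
      have ht : R ^ k = R ^ (q + 1) * R ^ (k - 1 - q) := by
        rw [← pow_add]; congr 1; omega
      have hx2 : R ^ (q + 1 + 1) = R * R ^ (q + 1) := pow_succ' R (q + 1)
      rw [SF_f2 m s k q hq, show 3 * q + 3 + 1 = 3 * (q + 1) + 1 by omega,
        SF_f0 m s k (q + 1) (by omega)]
      dsimp only
      rw [ht, hx2]
      exact ⟨by linear_combination e1, e2, e3, e4, by linear_combination e5, e6, e7⟩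
  · by_cases hcen : n = 3 * k - 1
    · -- C2c
      subst hcen
      obtain ⟨e1, e2, e3, e4, e5, e6, e7⟩ := famC2c hm1 hs1 hms2 (hRpow' k (by omega))
      have ht : R * R ^ (k - 1 - 0) = R ^ k := by
        rw [← pow_succ']; congr 1; omega
      rw [SF_center m s k (by omega), show 3 * k - 1 + 1 = 3 * k + 3 * 0 by omega,
        SF_s0 m s k 0 (by omega)]
      dsimp only
      rw [ht]
      exact ⟨by linear_combination e1, e2, e3, e4, by linear_combination e5, e6, e7⟩
    · rcases (by omega : (n - 3 * k) % 3 = 0 ∨ (n - 3 * k) % 3 = 1 ∨ (n - 3 * k) % 3 = 2)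
        with hb | hb | hb
      · -- C4
        obtain ⟨i, hi, rfl⟩ : ∃ i, i + 1 ≤ k ∧ n = 3 * k + 3 * i :=
          ⟨(n - 3 * k) / 3, by omega, by omega⟩
        obtain ⟨e1, e2, e3, e4, e5, e6, e7⟩ :=
          famC4 hm1 hs1 hms2 (hRpow i) (hRpow (k - 1 - i))
        have ht : R ^ k = R * R ^ i * R ^ (k - 1 - i) := by
          rw [show R * R ^ i = R ^ (i + 1) from (pow_succ' R i).symm, ← pow_add]
          congr 1; omega
        rw [SF_s0 m s k i hi]
        by_cases hi2 : i + 2 ≤ k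
        · rw [show 3 * k + 3 * i + 1 = 3 * k + 3 * i + 1 from rfl, SF_s1 m s k i hi2]
          dsimp only
          rw [ht]
          exact ⟨by linear_combination e1, e2, e3, e4, by linear_combination e5, e6, e7⟩
        · have hg1 : R ^ (k - 1 - i) = (1 : ℤ) := by
            rw [show k - 1 - i = 0 by omega, pow_zero]
          rw [show 3 * k + 3 * i + 1 = 6 * k - 2 by omega, SF_last m s k (by omega)]
          dsimp only
          rw [ht, hg1]
          rw [hg1] at e1 e2 e3 e4 e5 e6 e7
          refine ⟨by linear_combination e1, by linarith [e2], by norm_num,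
            by linarith [e4], by linear_combination e5, by linarith [e6], by linarith [e7]⟩
      · -- C5
        obtain ⟨i, hi, rfl⟩ : ∃ i, i + 2 ≤ k ∧ n = 3 * k + 3 * i + 1 :=
          ⟨(n - 3 * k) / 3, by omega, by omega⟩
        obtain ⟨e1, e2, e3, e4, e5, e6, e7⟩ :=
          famC5 hm1 hs1 hms2 (hRpow i) (hRpow' (k - 1 - i) (by omega))
        have ht : R ^ k = R * R ^ i * R ^ (k - 1 - i) := by
          rw [show R * R ^ i = R ^ (i + 1) from (pow_succ' R i).symm, ← pow_add]
          congr 1; omega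
        rw [SF_s1 m s k i hi, show 3 * k + 3 * i + 1 + 1 = 3 * k + 3 * i + 2 from rfl,
          SF_s2 m s k i hi]
        dsimp only
        rw [ht]
        exact ⟨by linear_combination e1, e2, e3, e4, by linear_combination e5, e6, e7⟩
      · -- C6
        obtain ⟨i, hi, rfl⟩ : ∃ i, i + 2 ≤ k ∧ n = 3 * k + 3 * i + 2 :=
          ⟨(n - 3 * k) / 3, by omega, by omega⟩
        obtain ⟨e1, e2, e3, e4, e5, e6, e7⟩ :=
          famC6 hm1 hs1 hms2 (hRpow i) (hRpow (k - 1 - i))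
        have ht : R ^ k = R * R ^ i * R ^ (k - 1 - i) := by
          rw [show R * R ^ i = R ^ (i + 1) from (pow_succ' R i).symm, ← pow_add]
          congr 1; omega
        have hg : R * R ^ (k - 1 - (i + 1)) = R ^ (k - 1 - i) := by
          rw [← pow_succ']; congr 1; omega
        rw [SF_s2 m s k i hi, show 3 * k + 3 * i + 2 + 1 = 3 * k + 3 * (i + 1) by omega,
          SF_s0 m s k (i + 1) (by omega)]
        dsimp only
        rw [ht, hg]
        exact ⟨by linear_combination e1, e2, e3, e4, by linear_combination e5, e6, e7⟩

end trans

section main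
variable (m s k : ℕ)

local notation "R" => (2 * (m : ℤ) * (s : ℤ) - 1)
local notation "DD" => ((m : ℤ) * (2 * R ^ k + (m : ℤ) * ((s : ℤ) - R ^ k) ^ 2))
local notation "AA" => ((m : ℤ) * (R ^ k - (s : ℤ)))
local notation "sqD" => Real.sqrt (((DD : ℤ) : ℤ) : ℝ)

variable (hm : 0 < m) (hs : 0 < s) (hk : 0 < k) (hms : 1 < m * s)
include hm hs hk hms

lemma basefacts :
    (1 ≤ (m : ℤ)) ∧ (1 ≤ (s : ℤ)) ∧ (2 ≤ (m : ℤ) * s) ∧ (R ≤ R ^ k) ∧ (0 < DD) ∧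
      ((AA + 1) ^ 2 < DD) ∧ (DD < (AA + 2) ^ 2) ∧ 0 ≤ AA := by
  have hm1 : 1 ≤ (m : ℤ) := by exact_mod_cast hm
  have hs1 : 1 ≤ (s : ℤ) := by exact_mod_cast hs
  have hms2 : 2 ≤ (m : ℤ) * (s : ℤ) := by exact_mod_cast hms
  have hsr' : (s : ℤ) + 1 ≤ R := hsr hm1 hs1 hms2
  have htR : R ≤ R ^ k := le_self_pow₀ (by linarith) (by omega)
  have hA : 0 ≤ AA := by nlinarith
  obtain ⟨e2, e4, e5, e6, e7⟩ := famC0 hm1 hs1 hms2 htR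
  refine ⟨hm1, hs1, hms2, htR, by nlinarith, by nlinarith, by nlinarith, hA⟩

lemma sqrtfacts :
    0 ≤ sqD ∧ (sqD) ^ 2 = ((DD : ℤ) : ℝ) := by
  obtain ⟨_, _, _, _, hD, _⟩ := basefacts m s k hm hs hk hms
  refine ⟨Real.sqrt_nonneg _, Real.sq_sqrt ?_⟩
  exact_mod_cast hD.le

lemma mainX : ∀ n, n ≤ 6 * k - 2 →
    (cfX (sqD) n = (((SF m s k n).1 : ℝ) + sqD) / ((SF m s k n).2.1 : ℝ)) ∧
    (1 ≤ n → cfA (sqD) (n - 1) = (SF m s k (n - 1)).2.2) := by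
  obtain ⟨hd0, hd2⟩ := sqrtfacts m s k hm hs hk hms
  intro n
  induction n with
  | zero =>
    intro _
    refine ⟨?_, by omega⟩
    rw [SF_zero]
    simp [cfX]
  | succ n ih =>
    intro hn1
    obtain ⟨hx, _⟩ := ih (by omega)
    obtain ⟨T1, T2, T3, T4, T5, T6, T7⟩ := transSF m s k hm hs hk hms n (by omega)
    rw [T1] at T4 T5 T6
    obtain ⟨hfl, hinv⟩ := cf_step hd0 hd2 T2 T3 T4 T5 T6
    have hxa : cfA (sqD) n = (SF m s k n).2.2 := by
      rw [cfA, hx, hfl]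
    refine ⟨?_, fun _ => by simpa using hxa⟩
    have : cfX (sqD) (n + 1)
        = (cfX (sqD) n - (⌊cfX (sqD) n⌋ : ℝ))⁻¹ := rfl
    rw [this, hx, hfl, hinv, ← T1]

end main

section final
variable (m s k : ℕ)

local notation "R" => (2 * (m : ℤ) * (s : ℤ) - 1)
local notation "DD" => ((m : ℤ) * (2 * R ^ k + (m : ℤ) * ((s : ℤ) - R ^ k) ^ 2))
local notation "AA" => ((m : ℤ) * (R ^ k - (s : ℤ)))
local notation "sqD" => Real.sqrt (((DD : ℤ) : ℤ) : ℝ)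

variable (hm : 0 < m) (hs : 0 < s) (hk : 0 < k) (hms : 1 < m * s)
include hm hs hk hms

lemma finalX :
    cfA sqD (6 * k - 2) = 2 * AA + 2 ∧
      cfX sqD (6 * k - 1) = (((AA + 1 : ℤ) : ℝ) + sqD) / ((R : ℤ) : ℝ) := by
  obtain ⟨hd0, hd2⟩ := sqrtfacts m s k hm hs hk hms
  obtain ⟨hm1, hs1, hms2, htR, hD, hlow, hup, hA⟩ := basefacts m s k hm hs hk hms
  obtain ⟨e2, e4, e5, e6, e7⟩ := famC0 hm1 hs1 hms2 htR
  have hx := (mainX m s k hm hs hk hms (6 * k - 2) (by omega)).1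
  rw [SF_last m s k (by omega)] at hx
  dsimp only at hx
  obtain ⟨hfl, hinv⟩ := cf_step (P := AA + 1) (Q := 1) (a := 2 * AA + 2) (Q' := R) hd0 hd2
    (by norm_num) (by linarith) (by linarith)
    (by linear_combination e5) (by linarith [e6])
  have hAfl : cfA sqD (6 * k - 2) = 2 * AA + 2 := by
    rw [cfA, hx]
    exact_mod_cast hfl
  refine ⟨hAfl, ?_⟩
  have hstep : cfX sqD (6 * k - 1) = (cfX sqD (6 * k - 2)
      - (⌊cfX sqD (6 * k - 2)⌋ : ℝ))⁻¹ := by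
    rw [show 6 * k - 1 = (6 * k - 2) + 1 by omega]
    rfl
  rw [hstep, hx, hfl, hinv,
    show ((2 * AA + 2) * 1 - (AA + 1) : ℤ) = AA + 1 from by ring]

lemma onecycle : cfX sqD (6 * k - 1) = cfX sqD 1 := by
  have h1 := (mainX m s k hm hs hk hms 1 (by omega)).1
  rw [show (1 : ℕ) = 3 * 0 + 1 by norm_num, SF_f0 m s k 0 (by omega)] at h1
  dsimp only at h1
  rw [zero_add, pow_one] at h1
  have hP : (m : ℤ) * (R ^ k + s) - R = AA + 1 := by ring
  rw [hP] at h1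
  rw [(finalX m s k hm hs hk hms).2, ← h1]

lemma periodX : ∀ j, 1 ≤ j → cfX sqD (j + (6 * k - 2)) = cfX sqD j := by
  intro j hj
  induction j with
  | zero => omega
  | succ j ih =>
    by_cases hj0 : j = 0
    · subst hj0
      rw [show 1 + (6 * k - 2) = 6 * k - 1 by omega]
      exact onecycle m s k hm hs hk hms
    · have h1 : j + 1 + (6 * k - 2) = (j + (6 * k - 2)) + 1 := by omega
      rw [h1]
      have h2 : cfX sqD ((j + (6 * k - 2)) + 1) = (cfX sqD (j + (6 * k - 2))
          - (⌊cfX sqD (j + (6 * k - 2))⌋ : ℝ))⁻¹ := rfl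
      have h3 : cfX sqD (j + 1) = (cfX sqD j - (⌊cfX sqD j⌋ : ℝ))⁻¹ := rfl
      rw [h2, h3, ih (by omega)]

lemma isleast : IsLeast {p : ℕ | cfPeriod sqD p} (6 * k - 2) := by
  constructor
  · refine ⟨by omega, fun n hn => ?_⟩
    unfold cfA
    rw [periodX m s k hm hs hk hms n hn]
  · intro p hp
    by_contra hlt
    push_neg at hlt
    have hp1 := hp.1
    have h₁ := hp.2 (6 * k - 2 - p) (by omega)
    rw [show 6 * k - 2 - p + p = 6 * k - 2 by omega] at h₁
    have h₂ := (finalX m s k hm hs hk hms).1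
    have h₃ : cfA sqD (6 * k - 2 - p) = (SF m s k (6 * k - 2 - p)).2.2 := by
      have h := (mainX m s k hm hs hk hms (6 * k - 2 - p + 1) (by omega)).2 (by omega)
      simpa using h
    have h₄ := (transSF m s k hm hs hk hms (6 * k - 2 - p) (by omega)).2.2.2.2.2.2
    rw [h₂, h₃] at h₁
    linarith [h₄, h₁.ge, h₁.le]

lemma nonsquare : ¬ IsSquare DD := by
  obtain ⟨hm1, hs1, hms2, htR, hD, hlow, hup, hA⟩ := basefacts m s k hm hs hk hms
  rintro ⟨e, he⟩
  have h1 : |e| * |e| = DD := by rw [abs_mul_abs_self]; exact he.symm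
  have h2 : 0 ≤ |e| := abs_nonneg e
  have h3 : AA + 1 < |e| := by nlinarith
  have h4 : |e| < AA + 2 := by nlinarith
  linarith

end final

/-- for `m s > 1` and
`D = m(2(2ms-1)^k + m(s - (2ms-1)^k)^2)`, `D` is a non-square positive integer
and the fundamental period of the continued fraction of `√D` has length `6k - 2`. -/
theorem period_cor1 (m s k : ℕ) (hm : 0 < m) (hs : 0 < s) (hk : 0 < k)
    (hms : 1 < m * s) :
    let r : ℤ := 2 * m * s - 1
    let D : ℤ := m * (2 * r ^ k + m * ((s : ℤ) - r ^ k) ^ 2)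
    0 < D ∧ ¬ IsSquare D ∧
      IsLeast {p : ℕ | cfPeriod (Real.sqrt (D : ℝ)) p} (6 * k - 2) := by
  intro r D
  obtain ⟨_, _, _, _, hD, _⟩ := basefacts m s k hm hs hk hms
  exact ⟨hD, nonsquare m s k hm hs hk hms, isleast m s k hm hs hk hms⟩
end

section
/- Let $a > 1$, $m$, $s$, $k$ be positive integers and set $D = m\big(m(s + a(2ams-1)^k)^2 - 2(2ams-1)^k\big)$. Then $D$ is a positive non-square integer and the fundamental period of the regular continued fraction expansion of $\sqrt{D}$ has length $6k + 4$. -/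
set_option linter.unusedVariables false

def CFSt (D : ℤ) (n : ℕ) (P Q : ℤ) : Prop :=
  cfX (Real.sqrt (D : ℝ)) n = ((P : ℝ) + Real.sqrt (D : ℝ)) / (Q : ℝ)

def CFBnd (D c : ℤ) (n : ℕ) : Prop :=
  ∃ P Q : ℤ, CFSt D n P Q ∧ 0 ≤ P ∧ P ≤ c - 1 ∧ 2 ≤ Q


lemma cfX_succ (x : ℝ) (n : ℕ) : cfX x (n+1) = (cfX x n - ⌊cfX x n⌋)⁻¹ := rfl

lemma cf_step_s9 (D P Q P' Q' A : ℤ) (n : ℕ)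
    (h : CFSt D n P Q)
    (hQ : 0 < Q) (hQ' : 0 < Q') (hP' : 0 ≤ P')
    (hrec : P + P' = A * Q) (hQQ : Q * Q' = D - P' ^ 2) (hlt : Q' < 2 * P' + Q) :
    cfA (Real.sqrt (D : ℝ)) n = A ∧ CFSt D (n+1) P' Q' := by
  have hD : 0 < D := by nlinarith
  set d : ℝ := Real.sqrt (D : ℝ) with hd
  have hd0 : 0 ≤ d := Real.sqrt_nonneg _
  have hd2 : d ^ 2 = (D : ℝ) := Real.sq_sqrt (by exact_mod_cast hD.le)
  have hP'd : (P' : ℝ) < d := by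
    rw [hd]
    rw [show ((P' : ℤ) : ℝ) = ((P' : ℤ) : ℝ) from rfl]
    refine (Real.lt_sqrt (by exact_mod_cast hP')).2 ?_
    have : (P' : ℤ) ^ 2 < D := by nlinarith
    exact_mod_cast this
  have hdU : d < (P' : ℝ) + (Q : ℝ) := by
    have h1 : (0 : ℝ) < (P' : ℝ) + (Q : ℝ) := by
      have : (0 : ℤ) < P' + Q := by linarith
      exact_mod_cast this
    rw [hd]
    refine (Real.sqrt_lt' h1).2 ?_
    have : D < (P' + Q) ^ 2 := by nlinarith
    exact_mod_cast this
  have hQR : (0 : ℝ) < (Q : ℝ) := by exact_mod_cast hQ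
  have hQ'R : (0 : ℝ) < (Q' : ℝ) := by exact_mod_cast hQ'
  have hxval : cfX d n = ((P : ℝ) + d) / (Q : ℝ) := h
  have hfloor : ⌊cfX d n⌋ = A := by
    rw [hxval, Int.floor_eq_iff]
    constructor
    · rw [le_div_iff₀ hQR]
      have : ((A * Q : ℤ) : ℝ) = (P : ℝ) + (P' : ℝ) := by exact_mod_cast hrec.symm
      push_cast at this ⊢
      nlinarith
    · rw [div_lt_iff₀ hQR]
      have : ((A * Q : ℤ) : ℝ) = (P : ℝ) + (P' : ℝ) := by exact_mod_cast hrec.symm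
      push_cast at this ⊢
      nlinarith
  constructor
  · exact hfloor
  · show cfX d (n+1) = ((P' : ℝ) + d) / (Q' : ℝ)
    rw [cfX_succ, hfloor, hxval]
    have hsub : ((P : ℝ) + d) / (Q : ℝ) - (A : ℝ) = (d - (P' : ℝ)) / (Q : ℝ) := by
      field_simp
      have : ((A * Q : ℤ) : ℝ) = (P : ℝ) + (P' : ℝ) := by exact_mod_cast hrec.symm
      push_cast at this
      linarith
    rw [hsub]
    have hne : d - (P' : ℝ) ≠ 0 := by linarith
    have hQQR : (Q : ℝ) * (Q' : ℝ) = (D : ℝ) - (P' : ℝ) ^ 2 := by exact_mod_cast hQQ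
    field_simp
    nlinarith [hQQR, hd2]

section Trans
variable (a m s u v c D : ℤ)

lemma packs (hm : 1 ≤ m) (hs : 1 ≤ s) (hu : 1 ≤ u) (hv : 1 ≤ v) :
    1 ≤ m*s ∧ 1 ≤ m*v ∧ 1 ≤ m*u ∧ 1 ≤ u*v ∧ 1 ≤ m*(u*v) ∧
    u ≤ m*(u*v) ∧ v ≤ m*(u*v) ∧ m*v ≤ m*(u*v) ∧ m*u ≤ m*(u*v) ∧
    u*v ≤ m*(u*v) ∧ u + m*v ≤ m*(u*v) + 1 ∧ v + m*u ≤ m*(u*v) + 1 := by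
  have h1 : (0:ℤ) ≤ m - 1 := by linarith
  have h2 : (0:ℤ) ≤ s - 1 := by linarith
  have h3 : (0:ℤ) ≤ u - 1 := by linarith
  have h4 : (0:ℤ) ≤ v - 1 := by linarith
  refine ⟨?_, ?_, ?_, ?_, ?_, ?_, ?_, ?_, ?_, ?_, ?_, ?_⟩ <;>
  nlinarith [mul_nonneg h1 h2, mul_nonneg h1 h3, mul_nonneg h1 h4,
    mul_nonneg h3 h4, mul_nonneg (mul_nonneg h1 h3) h4,
    mul_nonneg (mul_nonneg (by linarith : (0:ℤ) ≤ m) h3) h4,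
    mul_nonneg (mul_nonneg h1 h2) (mul_nonneg h3 h4)]

/-- T1 : from `3j` to `3j+1` : state `(c-2ms, u)` → `(c-u, 2c-u-2mv)`, quotient `2amv-1`. -/
lemma trans_T1 (ha : 2 ≤ a) (hm : 1 ≤ m) (hs : 1 ≤ s) (hu : 1 ≤ u) (hv : 1 ≤ v)
    (hc : c = m*s + a*m*(u*v)) (hD : D = c^2 - 2*m*(u*v)) (n : ℕ)
    (h : CFSt D n (c - 2*m*s) u) :
    cfA (Real.sqrt (D : ℝ)) n = 2*a*m*v - 1 ∧ CFSt D (n+1) (c - u) (2*c - u - 2*m*v) := by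
  obtain ⟨p1, p2, p3, p4, p5, p6, p7, p8, p9, p10, p11, p12⟩ := packs m s u v hm hs hu hv
  have pa : 2*(m*(u*v)) ≤ a*(m*(u*v)) := by nlinarith
  subst hc hD
  refine cf_step_s9 _ _ _ _ _ _ _ h (by linarith) (by nlinarith) (by nlinarith)
    (by ring) (by ring) (by nlinarith)

/-- T2 : from `3j+1` to `3j+2` : state `(c-u, 2c-u-2mv)` → `(c-2mv, 2mv)`, quotient `1`. -/
lemma trans_T2 (ha : 2 ≤ a) (hm : 1 ≤ m) (hs : 1 ≤ s) (hu : 1 ≤ u) (hv : 1 ≤ v)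
    (hc : c = m*s + a*m*(u*v)) (hD : D = c^2 - 2*m*(u*v)) (n : ℕ)
    (h : CFSt D n (c - u) (2*c - u - 2*m*v)) :
    cfA (Real.sqrt (D : ℝ)) n = 1 ∧ CFSt D (n+1) (c - 2*m*v) (2*m*v) := by
  obtain ⟨p1, p2, p3, p4, p5, p6, p7, p8, p9, p10, p11, p12⟩ := packs m s u v hm hs hu hv
  have pa : 2*(m*(u*v)) ≤ a*(m*(u*v)) := by nlinarith
  subst hc hD
  refine cf_step_s9 _ _ _ _ _ _ _ h (by nlinarith) (by nlinarith) (by nlinarith)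
    (by ring) (by ring) (by nlinarith)

set_option maxHeartbeats 1000000 in
/-- T3 : from `3j+2` to `3j+3` (`j<k`) : state `(c-2mv, 2mv)` → `(c-2ms, u*r)`,
quotient `a*u-1`; here `v = r^(k-j) ≥ r`. -/
lemma trans_T3 (r : ℤ) (ha : 2 ≤ a) (hm : 1 ≤ m) (hs : 1 ≤ s) (hu : 1 ≤ u)
    (hr : r = 2*a*m*s - 1) (hv : r ≤ v)
    (hc : c = m*s + a*m*(u*v)) (hD : D = c^2 - 2*m*(u*v)) (n : ℕ)
    (h : CFSt D n (c - 2*m*v) (2*m*v)) :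
    cfA (Real.sqrt (D : ℝ)) n = a*u - 1 ∧ CFSt D (n+1) (c - 2*m*s) (u*r) := by
  have hms : (1:ℤ) ≤ m*s := by nlinarith [mul_nonneg (by linarith : (0:ℤ) ≤ m-1) (by linarith : (0:ℤ) ≤ s-1)]
  have hams : 2 ≤ a*(m*s) := by nlinarith
  have hv1 : 1 ≤ v := by nlinarith
  obtain ⟨p1, p2, p3, p4, p5, p6, p7, p8, p9, p10, p11, p12⟩ := packs m s u v hm hs hu hv1
  have pa : 2*(m*(u*v)) ≤ a*(m*(u*v)) := by nlinarith
  have pb : u*r ≤ u*v := by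
    have : 0 ≤ (v - r) * u := mul_nonneg (by linarith) (by linarith)
    nlinarith
  have pc : 0 ≤ (m*s - 1) * u := mul_nonneg (by linarith) (by linarith)
  have pd : 0 ≤ (a*(m*s) - 2) * u := mul_nonneg (by linarith) (by linarith)
  subst hc hD
  have hrpos : 0 < r := by rw [hr]; nlinarith
  have pe : m*s ≤ m*(u*v) := by
    have hvs : s ≤ v := by nlinarith
    nlinarith [mul_nonneg (by linarith : (0:ℤ) ≤ m) (by linarith : (0:ℤ) ≤ v - s),
      mul_nonneg (mul_nonneg (by linarith : (0:ℤ) ≤ m) (by linarith : (0:ℤ) ≤ u - 1)) (by linarith : (0:ℤ) ≤ v)]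
  refine cf_step_s9 _ _ _ _ _ _ _ h (by nlinarith) (by positivity) (by nlinarith)
    (by ring) (by subst hr; ring) (by nlinarith [pa, pb, p10, pe])

/-- T4 : the middle step : state `(c-2m, 2m)` → `(c-2m, 2c-w-2m)`, quotient `s+a*w-2`. -/
lemma trans_T4 (w : ℤ) (ha : 2 ≤ a) (hm : 1 ≤ m) (hs : 1 ≤ s) (hw : 1 ≤ w)
    (hc : c = m*s + a*m*w) (hD : D = c^2 - 2*m*w) (n : ℕ)
    (h : CFSt D n (c - 2*m) (2*m)) :
    cfA (Real.sqrt (D : ℝ)) n = s + a*w - 2 ∧ CFSt D (n+1) (c - 2*m) (2*c - w - 2*m) := by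
  obtain ⟨p1, p2, p3, p4, p5, p6, p7, p8, p9, p10, p11, p12⟩ := packs m s w 1 hm hs hw le_rfl
  have pa : 2*(m*w) ≤ a*(m*w) := by nlinarith
  subst hc hD
  refine cf_step_s9 _ _ _ _ _ _ _ h (by linarith) (by nlinarith) (by nlinarith)
    (by ring) (by ring) (by nlinarith)

set_option maxHeartbeats 1000000 in
/-- R1 : descending : state `(c-u, u)` → `(c-2ms, 2m(vr))`, quotient `2amv-1`; `u = r^j ≥ r`. -/
lemma trans_R1 (r : ℤ) (ha : 2 ≤ a) (hm : 1 ≤ m) (hs : 1 ≤ s) (hv : 1 ≤ v)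
    (hr : r = 2*a*m*s - 1) (hu : r ≤ u)
    (hc : c = m*s + a*m*(u*v)) (hD : D = c^2 - 2*m*(u*v)) (n : ℕ)
    (h : CFSt D n (c - u) u) :
    cfA (Real.sqrt (D : ℝ)) n = 2*a*m*v - 1 ∧ CFSt D (n+1) (c - 2*m*s) (2*m*(v*r)) := by
  have hms : (1:ℤ) ≤ m*s := by nlinarith [mul_nonneg (by linarith : (0:ℤ) ≤ m-1) (by linarith : (0:ℤ) ≤ s-1)]
  have hams : 2 ≤ a*(m*s) := by nlinarith
  have hu1 : 1 ≤ u := by nlinarith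
  obtain ⟨p1, p2, p3, p4, p5, p6, p7, p8, p9, p10, p11, p12⟩ := packs m s u v hm hs hu1 hv
  have pa : 2*(m*(u*v)) ≤ a*(m*(u*v)) := by nlinarith
  have pb : m*(v*r) ≤ m*(u*v) := by
    have : 0 ≤ (u - r) * (m*v) := mul_nonneg (by linarith) (by linarith)
    nlinarith
  have pc : 0 ≤ (m*s - 1) * (m*(v*r)) := by
    have hrpos : (0:ℤ) < r := by rw [hr]; nlinarith
    exact mul_nonneg (by linarith) (by positivity)
  have pd : m*s ≤ m*(v*r) := by
    have : (0:ℤ) ≤ (r - s) * (m*v) := by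
      refine mul_nonneg ?_ (by linarith)
      rw [hr]; nlinarith
    nlinarith
  have hrpos : (0:ℤ) < r := by rw [hr]; nlinarith
  subst hc hD
  refine cf_step_s9 _ _ _ _ _ _ _ h (by linarith) (by positivity) (by nlinarith)
    (by ring) (by subst hr; ring) (by nlinarith [pa, pb, pd])

/-- R2 : descending : state `(c-2mv, 2c-u-2mv)` → `(c-u, u)`, quotient `1`. -/
lemma trans_R2 (ha : 2 ≤ a) (hm : 1 ≤ m) (hs : 1 ≤ s) (hu : 1 ≤ u) (hv : 1 ≤ v)
    (hc : c = m*s + a*m*(u*v)) (hD : D = c^2 - 2*m*(u*v)) (n : ℕ)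
    (h : CFSt D n (c - 2*m*v) (2*c - u - 2*m*v)) :
    cfA (Real.sqrt (D : ℝ)) n = 1 ∧ CFSt D (n+1) (c - u) u := by
  obtain ⟨p1, p2, p3, p4, p5, p6, p7, p8, p9, p10, p11, p12⟩ := packs m s u v hm hs hu hv
  have pa : 2*(m*(u*v)) ≤ a*(m*(u*v)) := by nlinarith
  subst hc hD
  refine cf_step_s9 _ _ _ _ _ _ _ h (by nlinarith) (by linarith) (by nlinarith)
    (by ring) (by ring) (by nlinarith)

/-- R3 : descending : state `(c-2ms, 2mv)` → `(c-2mv, 2c-u-2mv)`, quotient `a*u-1`. -/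
lemma trans_R3 (ha : 2 ≤ a) (hm : 1 ≤ m) (hs : 1 ≤ s) (hu : 1 ≤ u) (hv : 1 ≤ v)
    (hc : c = m*s + a*m*(u*v)) (hD : D = c^2 - 2*m*(u*v)) (n : ℕ)
    (h : CFSt D n (c - 2*m*s) (2*m*v)) :
    cfA (Real.sqrt (D : ℝ)) n = a*u - 1 ∧ CFSt D (n+1) (c - 2*m*v) (2*c - u - 2*m*v) := by
  obtain ⟨p1, p2, p3, p4, p5, p6, p7, p8, p9, p10, p11, p12⟩ := packs m s u v hm hs hu hv
  have pa : 2*(m*(u*v)) ≤ a*(m*(u*v)) := by nlinarith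
  subst hc hD
  refine cf_step_s9 _ _ _ _ _ _ _ h (by nlinarith) (by nlinarith) (by nlinarith)
    (by ring) (by ring) (by nlinarith)

/-- the step from `n=0` : state `(0,1)` → `(c-1, 2c-1-2mw)`, quotient `c-1`, `w = r^k`. -/
lemma trans_O (w : ℤ) (ha : 2 ≤ a) (hm : 1 ≤ m) (hs : 1 ≤ s) (hw : 1 ≤ w)
    (hc : c = m*s + a*m*w) (hD : D = c^2 - 2*m*w) (n : ℕ)
    (h : CFSt D n 0 1) :
    cfA (Real.sqrt (D : ℝ)) n = c - 1 ∧ CFSt D (n+1) (c - 1) (2*c - 1 - 2*m*w) := by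
  obtain ⟨p1, p2, p3, p4, p5, p6, p7, p8, p9, p10, p11, p12⟩ := packs m s w 1 hm hs hw le_rfl
  have pa : 2*(m*w) ≤ a*(m*w) := by nlinarith
  subst hc hD
  refine cf_step_s9 _ _ _ _ _ _ _ h (by linarith) (by nlinarith) (by nlinarith)
    (by ring) (by ring) (by nlinarith)

/-- the final step at `n = l` : state `(c-1, 1)` → `(c-1, 2c-1-2mw)`, quotient `2c-2`. -/
lemma trans_F (w : ℤ) (ha : 2 ≤ a) (hm : 1 ≤ m) (hs : 1 ≤ s) (hw : 1 ≤ w)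
    (hc : c = m*s + a*m*w) (hD : D = c^2 - 2*m*w) (n : ℕ)
    (h : CFSt D n (c - 1) 1) :
    cfA (Real.sqrt (D : ℝ)) n = 2*c - 2 ∧ CFSt D (n+1) (c - 1) (2*c - 1 - 2*m*w) := by
  obtain ⟨p1, p2, p3, p4, p5, p6, p7, p8, p9, p10, p11, p12⟩ := packs m s w 1 hm hs hw le_rfl
  have pa : 2*(m*w) ≤ a*(m*w) := by nlinarith
  subst hc hD
  refine cf_step_s9 _ _ _ _ _ _ _ h (by linarith) (by nlinarith) (by nlinarith)
    (by ring) (by ring) (by nlinarith)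

end Trans
set_option maxHeartbeats 1600000 in
theorem chain (a m s : ℤ) (k : ℕ) (ha : 2 ≤ a) (hm : 1 ≤ m) (hs : 1 ≤ s) (hk : 1 ≤ k)
    (r c D : ℤ) (hr : r = 2*a*m*s - 1) (hc : c = m*(s + a*r^k))
    (hDd : D = m*(m*(s + a*r^k)^2 - 2*r^k)) :
    cfX (Real.sqrt (D : ℝ)) (6*k+5) = cfX (Real.sqrt (D : ℝ)) 1 ∧
    cfA (Real.sqrt (D : ℝ)) (6*k+4) = 2*c - 2 ∧
    (∀ n, 1 ≤ n → n ≤ 6*k+3 → CFBnd D c n) ∧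
    (c-1)^2 < D ∧ D < c^2 ∧ 2 ≤ c := by
  have hr3 : 3 ≤ r := by nlinarith [mul_nonneg (by linarith : (0:ℤ) ≤ m-1) (by linarith : (0:ℤ) ≤ s-1), mul_nonneg (mul_nonneg (by linarith : (0:ℤ) ≤ a-2) (by linarith : (0:ℤ) ≤ m)) (by linarith : (0:ℤ) ≤ s)]
  have h1 : ∀ j : ℕ, (1:ℤ) ≤ r^j := fun j => one_le_pow₀ (by linarith)
  have hle : ∀ {i j : ℕ}, i ≤ j → r^i ≤ r^j := fun hij => pow_le_pow_right₀ (by linarith) hij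
  have hmul : ∀ {i j : ℕ}, i + j = k → r^i * r^j = r^k := by
    intro i j hij; rw [← pow_add, hij]
  have hc' : c = m*s + a*m*(r^k) := by rw [hc]; ring
  have hD' : D = c^2 - 2*m*(r^k) := by rw [hDd, hc]; ring
  have hms : (1:ℤ) ≤ m*s := by nlinarith [mul_nonneg (by linarith : (0:ℤ) ≤ m-1) (by linarith : (0:ℤ) ≤ s-1)]
  have hmr : ∀ j : ℕ, r^j ≤ m*r^j := fun j => by nlinarith [mul_nonneg (by linarith : (0:ℤ) ≤ m-1) (by linarith [h1 j] : (0:ℤ) ≤ r^j)]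
  have hmrle : ∀ {i j : ℕ}, i ≤ j → m*r^i ≤ m*r^j := by
    intro i j hij
    have h9 := hle hij
    nlinarith [mul_nonneg (by linarith : (0:ℤ) ≤ m) (by linarith : (0:ℤ) ≤ r^j - r^i)]
  have hamr : 2*(m*r^k) ≤ a*(m*r^k) := by
    nlinarith [mul_nonneg (by linarith : (0:ℤ) ≤ a-2) (by nlinarith [hmr k, h1 k] : (0:ℤ) ≤ m*r^k)]
  have hsr : m*s ≤ m*r^k := by
    have h5 : s ≤ r := by nlinarith [mul_nonneg (mul_nonneg (by linarith : (0:ℤ) ≤ a-1) (by linarith : (0:ℤ) ≤ m)) (by linarith : (0:ℤ) ≤ s), mul_nonneg (by linarith : (0:ℤ) ≤ m-1) (by linarith : (0:ℤ) ≤ s)]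
    have h6 : r ≤ r^k := by
      calc r = r^1 := (pow_one r).symm
        _ ≤ r^k := hle hk
    nlinarith [mul_nonneg (by linarith : (0:ℤ) ≤ m) (by linarith : (0:ℤ) ≤ r^k - s)]
  have hrk3 : 3 ≤ r^k := by
    have h6 : r ≤ r^k := by
      calc r = r^1 := (pow_one r).symm
        _ ≤ r^k := hle hk
    linarith

  have hm0 : (0:ℤ) ≤ m := by linarith
  have hmge : ∀ j : ℕ, m ≤ m*r^j := by
    intro j
    nlinarith [mul_nonneg hm0 (by linarith [h1 j] : (0:ℤ) ≤ r^j - 1)]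
  have hrj3 : ∀ {j : ℕ}, 1 ≤ j → (3:ℤ) ≤ r^j := by
    intro j hj
    calc (3:ℤ) ≤ r := hr3
      _ = r^1 := (pow_one r).symm
      _ ≤ r^j := hle hj
  have hvk : ∀ {j : ℕ}, 1 ≤ j → r ≤ r^j := by
    intro j hj
    calc r = r^1 := (pow_one r).symm
      _ ≤ r^j := hle hj
  -- bound helpers (three standard state shapes)
  have bndA : ∀ i j : ℕ, i ≤ k → j ≤ k →
      0 ≤ c - r^i ∧ c - r^i ≤ c - 1 ∧ 2 ≤ 2*c - r^i - 2*m*r^j := by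
    intro i j hi hj
    have e1 := hle hi; have e2 := hmrle hj; have e3 := hmr k; have e4 := h1 i
    refine ⟨by linarith [hc'], by linarith, by linarith [hc', hms, hamr]⟩
  have bndB : ∀ j : ℕ, j ≤ k → 0 ≤ c - 2*m*r^j ∧ c - 2*m*r^j ≤ c - 1 ∧ 2 ≤ 2*m*r^j := by
    intro j hj
    have e2 := hmrle hj; have e3 := hmr k; have e4 := hmr j; have e5 := h1 j
    refine ⟨by linarith [hc', hms, hamr], by linarith, by linarith⟩
  have bndC : 0 ≤ c - 2*m*s ∧ c - 2*m*s ≤ c - 1 := by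
    have e3 := hmr k
    refine ⟨by linarith [hc', hamr, hsr], by linarith [hms]⟩
  -- the ascending chain
  have asc : ∀ j : ℕ, j ≤ k →
      CFSt D (3*j+1) (c - r^j) (2*c - r^j - 2*m*r^(k-j)) ∧
      (∀ n, 1 ≤ n → n ≤ 3*j+1 → CFBnd D c n) := by
    intro j
    induction j with
    | zero =>
      intro _
      have h0 : CFSt D 0 0 1 := by
        show cfX _ 0 = _
        show Real.sqrt (D:ℝ) = _
        push_cast
        rw [zero_add, div_one]
      have h01 := (trans_O a m s c D (r^k) ha hm hs (h1 k) hc' hD' 0 h0).2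
      have hst : CFSt D (3*0+1) (c - r^0) (2*c - r^0 - 2*m*r^(k-0)) := by
        simpa only [pow_zero, Nat.sub_zero] using h01
      refine ⟨hst, ?_⟩
      intro n hn1 hn2
      have hn : n = 1 := by omega
      subst hn
      obtain ⟨b1, b2, b3⟩ := bndA 0 k (by omega) le_rfl
      exact ⟨c - r^0, 2*c - r^0 - 2*m*r^(k-0), by simpa using hst,
        b1, b2, by simpa only [Nat.sub_zero] using b3⟩
    | succ j ih =>
      intro hjk
      have hj : j ≤ k := by omega
      obtain ⟨hst, hpool⟩ := ih hj
      have hc2 : c = m*s + a*m*(r^j * r^(k-j)) := by rw [hmul (by omega)]; exact hc'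
      have hD2 : D = c^2 - 2*m*(r^j * r^(k-j)) := by rw [hmul (by omega)]; exact hD'
      have h2 := (trans_T2 a m s (r^j) (r^(k-j)) c D ha hm hs (h1 j) (h1 (k-j)) hc2 hD2 (3*j+1) hst).2
      have h3 := (trans_T3 a m s (r^j) (r^(k-j)) c D r ha hm hs (h1 j) hr
        (hvk (by omega)) hc2 hD2 (3*j+1+1) h2).2
      rw [(by rw [pow_succ] : r^j * r = r^(j+1)),
          (by omega : 3*j+1+1+1 = 3*j+3)] at h3
      have hc3 : c = m*s + a*m*(r^(j+1) * r^(k-(j+1))) := by rw [hmul (by omega)]; exact hc'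
      have hD3 : D = c^2 - 2*m*(r^(j+1) * r^(k-(j+1))) := by rw [hmul (by omega)]; exact hD'
      have h4 := (trans_T1 a m s (r^(j+1)) (r^(k-(j+1))) c D ha hm hs (h1 (j+1))
        (h1 (k-(j+1))) hc3 hD3 (3*j+3) h3).2
      rw [(by omega : 3*j+3+1 = 3*(j+1)+1)] at h4
      refine ⟨h4, ?_⟩
      intro n hn1 hn2
      by_cases hn : n ≤ 3*j+1
      · exact hpool n hn1 hn
      · have hn' : n = 3*j+1+1 ∨ n = 3*j+3 ∨ n = 3*(j+1)+1 := by omega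
        rcases hn' with h | h | h <;> subst h
        · obtain ⟨b1, b2, b3⟩ := bndB (k-j) (by omega)
          exact ⟨_, _, h2, b1, b2, b3⟩
        · refine ⟨_, _, h3, bndC.1, bndC.2, ?_⟩
          linarith [hrj3 (by omega : 1 ≤ j+1)]
        · obtain ⟨b1, b2, b3⟩ := bndA (j+1) (k-(j+1)) (by omega) (by omega)
          exact ⟨_, _, h4, b1, b2, b3⟩
  -- middle
  obtain ⟨hak, hapool⟩ := asc k le_rfl
  rw [Nat.sub_self] at hak
  have hck : c = m*s + a*m*(r^k * r^0) := by rw [hmul (by omega)]; exact hc'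
  have hDk : D = c^2 - 2*m*(r^k * r^0) := by rw [hmul (by omega)]; exact hD'
  have hmid1 := (trans_T2 a m s (r^k) (r^0) c D ha hm hs (h1 k) (h1 0) hck hDk (3*k+1) hak).2
  have hmid1' : CFSt D (3*k+1+1) (c - 2*m) (2*m) := by
    simpa only [pow_zero, mul_one] using hmid1
  have hmid2 := (trans_T4 a m s c D (r^k) ha hm hs (h1 k) hc' hD' (3*k+1+1) hmid1').2
  rw [(by omega : 3*k+1+1+1 = 3*(k+0)+3)] at hmid2
  -- descending chain
  have desc : ∀ i : ℕ, i ≤ k →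
      CFSt D (3*(k+i)+3) (c - 2*m*r^i) (2*c - r^(k-i) - 2*m*r^i) ∧
      (∀ n, 1 ≤ n → n ≤ 3*(k+i)+3 → CFBnd D c n) := by
    intro i
    induction i with
    | zero =>
      intro _
      have hst : CFSt D (3*(k+0)+3) (c - 2*m*r^0) (2*c - r^(k-0) - 2*m*r^0) := by
        simpa only [pow_zero, mul_one, Nat.sub_zero] using hmid2
      refine ⟨hst, ?_⟩
      intro n hn1 hn2
      by_cases hn : n ≤ 3*k+1
      · exact hapool n hn1 hn
      · have hn' : n = 3*k+1+1 ∨ n = 3*(k+0)+3 := by omega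
        rcases hn' with h | h <;> subst h
        · obtain ⟨b1, b2, b3⟩ := bndB 0 (by omega)
          refine ⟨_, _, hmid1', ?_, ?_, ?_⟩
          · simpa only [pow_zero, mul_one] using b1
          · simpa only [pow_zero, mul_one] using b2
          · simpa only [pow_zero, mul_one] using b3
        · refine ⟨_, _, hst, ?_, ?_, ?_⟩ <;>
            simp only [Nat.sub_zero, pow_zero, mul_one] <;>
            [ (obtain ⟨e1, e2, e3⟩ := bndB 0 (by omega);
               simp only [pow_zero, mul_one] at e1 e2 e3; linarith);
              (obtain ⟨e1, e2, e3⟩ := bndB 0 (by omega);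
               simp only [pow_zero, mul_one] at e1 e2 e3; linarith);
              (have e3 := hmr k; have e4 := hmge k;
               linarith [hc', hms, hamr])]
    | succ i ih =>
      intro hik
      have hi : i ≤ k := by omega
      obtain ⟨hst, hpool⟩ := ih hi
      have hc2 : c = m*s + a*m*(r^(k-i) * r^i) := by rw [hmul (by omega)]; exact hc'
      have hD2 : D = c^2 - 2*m*(r^(k-i) * r^i) := by rw [hmul (by omega)]; exact hD'
      have h2 := (trans_R2 a m s (r^(k-i)) (r^i) c D ha hm hs (h1 (k-i)) (h1 i)
        hc2 hD2 (3*(k+i)+3) hst).2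
      have h3 := (trans_R1 a m s (r^(k-i)) (r^i) c D r ha hm hs (h1 i) hr
        (hvk (by omega)) hc2 hD2 (3*(k+i)+3+1) h2).2
      rw [(by rw [pow_succ] : r^i * r = r^(i+1))] at h3
      have hc3 : c = m*s + a*m*(r^(k-(i+1)) * r^(i+1)) := by rw [hmul (by omega)]; exact hc'
      have hD3 : D = c^2 - 2*m*(r^(k-(i+1)) * r^(i+1)) := by rw [hmul (by omega)]; exact hD'
      have h4 := (trans_R3 a m s (r^(k-(i+1))) (r^(i+1)) c D ha hm hs (h1 (k-(i+1)))
        (h1 (i+1)) hc3 hD3 (3*(k+i)+3+1+1) h3).2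
      rw [(by omega : 3*(k+i)+3+1+1+1 = 3*(k+(i+1))+3)] at h4
      refine ⟨h4, ?_⟩
      intro n hn1 hn2
      by_cases hn : n ≤ 3*(k+i)+3
      · exact hpool n hn1 hn
      · have hn' : n = 3*(k+i)+3+1 ∨ n = 3*(k+i)+3+1+1 ∨ n = 3*(k+(i+1))+3 := by omega
        rcases hn' with h | h | h <;> subst h
        · obtain ⟨b1, b2, b3⟩ := bndA (k-i) 0 (by omega) (by omega)
          refine ⟨_, _, h2, b1, b2, ?_⟩
          linarith [hrj3 (by omega : 1 ≤ k-i)]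
        · refine ⟨_, _, h3, bndC.1, bndC.2, ?_⟩
          have e4 := hmr (i+1)
          linarith [hrj3 (by omega : 1 ≤ i+1)]
        · obtain ⟨b1, b2, b3⟩ := bndB (i+1) (by omega)
          obtain ⟨c1, c2, c3⟩ := bndA (k-(i+1)) (i+1) (by omega) (by omega)
          exact ⟨_, _, h4, b1, b2, c3⟩
  -- final steps
  obtain ⟨hdk, hdpool⟩ := desc k le_rfl
  rw [Nat.sub_self] at hdk
  have hck' : c = m*s + a*m*(r^0 * r^k) := by rw [hmul (by omega)]; exact hc'
  have hDk' : D = c^2 - 2*m*(r^0 * r^k) := by rw [hmul (by omega)]; exact hD'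
  have hfin1 := (trans_R2 a m s (r^0) (r^k) c D ha hm hs (h1 0) (h1 k)
    hck' hDk' (3*(k+k)+3) hdk).2
  have hfin1' : CFSt D (6*k+4) (c - 1) 1 := by
    have e : (3*(k+k)+3+1 : ℕ) = 6*k+4 := by omega
    rw [e] at hfin1
    simpa only [pow_zero] using hfin1
  have hfin := trans_F a m s c D (r^k) ha hm hs (h1 k) hc' hD' (6*k+4) hfin1'
  have hx1 : CFSt D 1 (c - 1) (2*c - 1 - 2*m*r^k) := by
    have := (asc 0 (by omega)).1
    simp only [pow_zero, Nat.sub_zero] at this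
    simpa using this
  have hfacts : (c-1)^2 < D ∧ D < c^2 ∧ 2 ≤ c := by
    have e3 := hmr k
    refine ⟨by nlinarith [hc', hms, hamr, hrk3], by nlinarith [hrk3], by nlinarith [hc', hms, hamr, hrk3]⟩
  refine ⟨?_, hfin.1, ?_, hfacts⟩
  · have e1 : cfX (Real.sqrt (D:ℝ)) (6*k+5) = (((c-1 : ℤ):ℝ) + Real.sqrt (D:ℝ)) / ((2*c-1-2*m*r^k : ℤ):ℝ) := by
      have := hfin.2
      rw [(by omega : 6*k+4+1 = 6*k+5)] at this
      exact this
    have e2 : cfX (Real.sqrt (D:ℝ)) 1 = (((c-1 : ℤ):ℝ) + Real.sqrt (D:ℝ)) / ((2*c-1-2*m*r^k : ℤ):ℝ) := hx1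
    rw [e1, e2]
  · intro n hn1 hn2
    exact hdpool n hn1 (by omega)


lemma cfX_of_period (x : ℝ) (l : ℕ) (h : cfX x (6*l+5) = cfX x 1) :
    ∀ n, 1 ≤ n → cfX x (n + (6*l+4)) = cfX x n := by
  intro n hn
  induction n with
  | zero => omega
  | succ n ih =>
    rcases Nat.eq_zero_or_pos n with h0 | h0
    · subst h0
      have e : 1 + (6*l+4) = 6*l+5 := by omega
      rw [e]; exact h
    · have e : n + 1 + (6*l+4) = (n + (6*l+4)) + 1 := by omega
      rw [e]
      show (cfX x (n + (6*l+4)) - ⌊cfX x (n + (6*l+4))⌋)⁻¹ = _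
      rw [ih h0]
      rfl

lemma cfA_mul_period (x : ℝ) (p : ℕ) (hp : cfPeriod x p) :
    ∀ t n, 1 ≤ n → cfA x (n + t*p) = cfA x n := by
  intro t
  induction t with
  | zero => intro n hn; simp
  | succ t ih =>
    intro n hn
    have e : n + (t+1)*p = (n + t*p) + p := by ring
    rw [e, hp.2 _ (by omega), ih n hn]

lemma nat_bezout (p q : ℕ) (hp : 0 < p) (hq : 0 < q) :
    ∃ x y : ℕ, x * p = Nat.gcd p q + y * q := by
  have hbez : ((Nat.gcd p q : ℤ)) = p * Nat.gcdA p q + q * Nat.gcdB p q := Nat.gcd_eq_gcd_ab p q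
  set g : ℤ := (Nat.gcd p q : ℤ) with hgdef
  set A := Nat.gcdA p q
  set B := Nat.gcdB p q
  have hq0 : (0:ℤ) < q := by exact_mod_cast hq
  have hp0 : (0:ℤ) < p := by exact_mod_cast hp
  have hg0 : 0 < g := by
    rw [hgdef]
    exact_mod_cast Nat.gcd_pos_of_pos_left q hp
  have hgq : g ≤ q := by
    rw [hgdef]
    exact_mod_cast Nat.gcd_le_right (m := p) hq
  set x0 : ℤ := A % q with hx0def
  have hx0n : 0 ≤ x0 := Int.emod_nonneg A (ne_of_gt hq0)
  have hdvd : (p:ℤ) * x0 - g = q * (-(p * (A / q) + B)) := by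
    have hA : A % q = A - q * (A / q) := Int.emod_def A q
    rw [hx0def, hA, hbez]; ring
  set w : ℤ := -(p * (A / q) + B) with hwdef
  have hw : (p:ℤ) * x0 - g = q * w := hdvd
  have hwm : -1 ≤ w := by
    by_contra hcon
    push_neg at hcon
    have h2 : w ≤ -2 := by omega
    have : (q:ℤ) * w ≤ q * (-2) := by
      exact mul_le_mul_of_nonneg_left h2 (by linarith)
    nlinarith [mul_nonneg hp0.le hx0n]
  refine ⟨(x0 + q).toNat, (w + p).toNat, ?_⟩
  have e1 : ((x0 + q).toNat : ℤ) = x0 + q := Int.toNat_of_nonneg (by linarith)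
  have e2 : ((w + p).toNat : ℤ) = w + p := Int.toNat_of_nonneg (by linarith)
  have hfin : ((x0 + q).toNat : ℤ) * p = g + ((w + p).toNat : ℤ) * q := by
    rw [e1, e2]; nlinarith [hw]
  rw [hgdef] at hfin
  exact_mod_cast hfin

lemma cfPeriod_gcd (x : ℝ) (p q : ℕ) (hp : cfPeriod x p) (hq : cfPeriod x q) :
    cfPeriod x (Nat.gcd p q) := by
  refine ⟨Nat.gcd_pos_of_pos_left q hp.1, ?_⟩
  intro n hn
  obtain ⟨u, y, huy⟩ := nat_bezout p q hp.1 hq.1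
  have h1 : cfA x (n + Nat.gcd p q + y * q) = cfA x (n + Nat.gcd p q) :=
    cfA_mul_period x q hq y _ (by omega)
  have h2 : n + Nat.gcd p q + y * q = n + u * p := by omega
  rw [h2] at h1
  rw [← h1, cfA_mul_period x p hp u n hn]

lemma cfA_lt_of_bnd (D c : ℤ) (n : ℕ) (hb : CFBnd D c n) (hc2 : 2 ≤ c)
    (hDc : D < c^2) (hD0 : 0 ≤ D) :
    cfA (Real.sqrt (D : ℝ)) n < 2*c - 2 := by
  obtain ⟨P, Q, hst, hP0, hPc, hQ⟩ := hb
  have hcR : (0:ℝ) < (c:ℝ) := by exact_mod_cast (by linarith : (0:ℤ) < c)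
  have hd : Real.sqrt (D:ℝ) < (c:ℝ) := by
    refine (Real.sqrt_lt' hcR).2 ?_
    exact_mod_cast hDc
  have hd0 : 0 ≤ Real.sqrt (D:ℝ) := Real.sqrt_nonneg _
  have hQR : (2:ℝ) ≤ (Q:ℝ) := by exact_mod_cast hQ
  have hPR : (P:ℝ) ≤ (c:ℝ) - 1 := by exact_mod_cast hPc
  have hP0R : (0:ℝ) ≤ (P:ℝ) := by exact_mod_cast hP0
  show ⌊cfX (Real.sqrt (D:ℝ)) n⌋ < 2*c - 2
  rw [hst]
  rw [Int.floor_lt]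
  have hnum : (0:ℝ) ≤ (P:ℝ) + Real.sqrt (D:ℝ) := by linarith
  have h1 : ((P:ℝ) + Real.sqrt (D:ℝ)) / (Q:ℝ) ≤ ((P:ℝ) + Real.sqrt (D:ℝ)) / 2 :=
    div_le_div_of_nonneg_left hnum (by norm_num) hQR
  have h2 : ((P:ℝ) + Real.sqrt (D:ℝ)) / 2 < ((2*c - 2 : ℤ) : ℝ) := by
    push_cast
    rw [div_lt_iff₀ (by norm_num : (0:ℝ) < 2)]
    have hc2R : (2:ℝ) ≤ (c:ℝ) := by exact_mod_cast hc2
    linarith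
  calc ((P:ℝ) + Real.sqrt (D:ℝ)) / (Q:ℝ) ≤ ((P:ℝ) + Real.sqrt (D:ℝ)) / 2 := h1
    _ < _ := h2

lemma not_isSquare (D c : ℤ) (h1 : (c-1)^2 < D) (h2 : D < c^2) (hc : 1 ≤ c) :
    ¬ IsSquare D := by
  rintro ⟨t, rfl⟩
  have habs : |t| * |t| = t * t := abs_mul_abs_self t
  have h0 : 0 ≤ |t| := abs_nonneg t
  rcases le_or_gt (|t|) (c-1) with h | h
  · nlinarith
  · have : c ≤ |t| := by omega
    nlinarith

/-- Theorem t1b: for `a > 1` and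
`D = m(m(s + a(2ams-1)^k)^2 - 2(2ams-1)^k)`, `D` is a positive non-square
integer and the fundamental period of the continued fraction of `√D` has
length `6k + 4`. -/
theorem period_t1b (a m s k : ℕ) (ha : 1 < a) (hm : 0 < m) (hs : 0 < s)
    (hk : 0 < k) :
    let r : ℤ := 2 * a * m * s - 1
    let D : ℤ := m * (m * ((s : ℤ) + a * r ^ k) ^ 2 - 2 * r ^ k)
    0 < D ∧ ¬ IsSquare D ∧
      IsLeast {p : ℕ | cfPeriod (Real.sqrt (D : ℝ)) p} (6 * k + 4) := by
  intro r D
  have ha' : (2:ℤ) ≤ (a:ℤ) := by exact_mod_cast ha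
  have hm' : (1:ℤ) ≤ (m:ℤ) := by exact_mod_cast hm
  have hs' : (1:ℤ) ≤ (s:ℤ) := by exact_mod_cast hs
  have hk' : 1 ≤ k := hk
  have hrdef : r = 2*(a:ℤ)*(m:ℤ)*(s:ℤ) - 1 := rfl
  have hDdef : D = (m:ℤ)*((m:ℤ)*((s:ℤ) + (a:ℤ)*r^k)^2 - 2*r^k) := rfl
  obtain ⟨hC1, hC2, hC3, hlow, hhigh, hc2⟩ :=
    chain (a:ℤ) (m:ℤ) (s:ℤ) k ha' hm' hs' hk' r ((m:ℤ)*((s:ℤ)+(a:ℤ)*r^k)) D hrdef rfl hDdef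
  set c : ℤ := (m:ℤ)*((s:ℤ)+(a:ℤ)*r^k) with hcdef
  set x : ℝ := Real.sqrt (D:ℝ) with hxdef
  have hD0 : 0 < D := by nlinarith [sq_nonneg (c-1)]
  have hmem : cfPeriod x (6*k+4) := by
    refine ⟨by omega, ?_⟩
    intro n hn
    show (⌊cfX x (n + (6*k+4))⌋ : ℤ) = ⌊cfX x n⌋
    rw [cfX_of_period x k hC1 n hn]
  refine ⟨hD0, not_isSquare D c hlow hhigh (by linarith), hmem, ?_⟩
  intro p hp
  simp only [Set.mem_setOf_eq] at hp
  by_contra hlt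
  push_neg at hlt
  have hpp : 0 < p := hp.1
  set g := Nat.gcd p (6*k+4) with hgdef
  have hgper : cfPeriod x g := cfPeriod_gcd x p (6*k+4) hp hmem
  have hgd : g ∣ 6*k+4 := Nat.gcd_dvd_right _ _
  have hgle : g ≤ p := Nat.gcd_le_left _ hpp
  have hglt : g < 6*k+4 := by omega
  have hg1 : 0 < g := Nat.gcd_pos_of_pos_left _ hpp
  obtain ⟨t, ht⟩ := hgd
  have ht0 : t ≠ 0 := by rintro rfl; omega
  have ht1 : t ≠ 1 := by rintro rfl; omega
  obtain ⟨t', rfl⟩ : ∃ t', t = t' + 1 := ⟨t - 1, by omega⟩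
  have heq : cfA x (6*k+4) = cfA x g := by
    have hmul := cfA_mul_period x g hgper t' g (by omega)
    have e : g + t'*g = 6*k+4 := by rw [ht]; ring
    rw [e] at hmul
    exact hmul
  have h2 : cfA x g < 2*c - 2 :=
    cfA_lt_of_bnd D c g (hC3 g hg1 (by omega)) hc2 hhigh (by linarith)
  rw [hC2] at heq
  omega
end
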